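/- arXiv:1012.1425 — 6 statements merged into one kernel-verified Lean document; each statement's English description precedes it below -/
import Mathlib

section
/- If a code C has two Tanner graph representations G and G', where G' is obtained from G by merging some sets of constraint nodes (each merged node enforcing all constraints of the nodes it replaces), then the fundamental LP polytope Q'(C) of G' is contained in the fundamental polytope Q(C) of G. -/
/-- Membership of a real vector `c` in the local LP polytope of the constituent
code `C` on the index set `S`: `c` is (on `S`) a convex combination of the
codewords of `C`. -/
def inLocal {N : ℕ} (S : Finset (Fin N)) (C : Set (Fin N → Bool)) (c : Fin N → ℝ) : Prop :=
  ∃ w : (Fin N → Bool) → ℝ,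
    (∀ g, 0 ≤ w g) ∧ (∀ g, g ∉ C → w g = 0) ∧ (∑ g, w g) = 1 ∧
    ∀ i ∈ S, c i = ∑ g, (if g i = true then w g else 0)

/-- if the Tanner graph `G'` is obtained from `G` by merging groups of
constraint nodes (described by the grouping map `m : J → J'`), with the merged
constituent code enforcing all constraints of the nodes it replaces, then the
fundamental polytope of `G'` is contained in that of `G`. -/
theorem merged_fundamental_polytope_subset
    {N : ℕ} {J J' : Type} [Fintype J] [DecidableEq J']
    (Nbr : J → Finset (Fin N)) (C : J → Set (Fin N → Bool)) (m : J → J')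
    (c : Fin N → ℝ)
    (hQ' : (∀ i, 0 ≤ c i ∧ c i ≤ 1) ∧
      ∀ j' : J',
        inLocal (Finset.univ.biUnion fun j => if m j = j' then Nbr j else ∅)
          {g | ∀ j, m j = j' → g ∈ C j} c) :
    (∀ i, 0 ≤ c i ∧ c i ≤ 1) ∧ ∀ j, inLocal (Nbr j) (C j) c := by
  refine ⟨hQ'.1, fun j => ?_⟩
  obtain ⟨w, hw0, hwsupp, hwsum, hwc⟩ := hQ'.2 (m j)
  refine ⟨w, hw0, fun g hg => ?_, hwsum, fun i hi => ?_⟩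
  · exact hwsupp g (fun h => hg (h j rfl))
  · exact hwc i (Finset.mem_biUnion.2 ⟨j, Finset.mem_univ j, by simp [hi]⟩)
end

section
/- Let C_1 be a binary code on index set S_1 ∪ {k} and C_2 a binary code on {k} ∪ S_2, where S_1, S_2, {k} are pairwise disjoint, and let C' = {(ĝ_1, b, ĝ_2) : (ĝ_1, b) ∈ C_1, (b, ĝ_2) ∈ C_2} be the code obtained by gluing along the shared coordinate k. If c is a vector with 0 < c_k < 1 that lies in the convex hulls of both C_1 (on S_1 ∪ {k}) and C_2 (on {k} ∪ S_2), then the restriction of c to S_1 ∪ {k} ∪ S_2 lies in the convex hull of C'. -/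
/-- gluing two codes along a shared coordinate `k`.  If
`0 < c k < 1` and `c` lies in the convex hull of `C₁` (on `S₁ ∪ {k}`) and of
`C₂` (on `{k} ∪ S₂`), then `c` lies on `S₁ ∪ {k} ∪ S₂` in the convex hull of
the glued code `C' = {(ĝ₁,b,ĝ₂) : (ĝ₁,b) ∈ C₁, (b,ĝ₂) ∈ C₂}`. -/
theorem glued_code_convex_hull
    {N : ℕ} (S1 S2 : Finset (Fin N)) (k : Fin N)
    (hdisj : Disjoint S1 S2) (hk1 : k ∉ S1) (hk2 : k ∉ S2)
    (C1 C2 : Set (Fin N → Bool)) (c : Fin N → ℝ)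
    (hck0 : 0 < c k) (hck1 : c k < 1)
    (h1 : inLocal (insert k S1) C1 c) (h2 : inLocal (insert k S2) C2 c) :
    inLocal (insert k (S1 ∪ S2))
      {g | ∃ g1 ∈ C1, ∃ g2 ∈ C2,
        (∀ i ∈ insert k S1, g i = g1 i) ∧ (∀ i ∈ insert k S2, g i = g2 i)} c := by
  classical
  obtain ⟨w1, hw1n, hw1s, hw1sum, hw1c⟩ := h1
  obtain ⟨w2, hw2n, hw2s, hw2sum, hw2c⟩ := h2
  set d : Bool → ℝ := fun b => if b then c k else 1 - c k with hd
  have hdpos : ∀ b, 0 < d b := by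
    intro b; cases b <;> simp [hd] <;> linarith
  have key : ∀ (w : (Fin N → Bool) → ℝ), (∑ g, w g) = 1 →
      (c k = ∑ g, if g k = true then w g else 0) →
      ∀ b, (∑ g, if g k = b then w g else 0) = d b := by
    intro w hsum hck b
    have hsplit : (∑ g, if g k = true then w g else 0)
        + (∑ g, if g k = false then w g else 0) = 1 := by
      rw [← hsum, ← Finset.sum_add_distrib]
      exact Finset.sum_congr rfl fun g _ => by cases h : g k <;> simp [h]
    cases b
    · have hT : (∑ g, if g k = true then w g else 0) = c k := hck.symm
      have : (∑ g, if g k = false then w g else 0) = 1 - c k := by linarith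
      simpa [hd] using this
    · simpa [hd] using hck.symm
  have hB1 : ∀ b, (∑ g, if g k = b then w1 g else 0) = d b :=
    key w1 hw1sum (hw1c k (Finset.mem_insert_self k S1))
  have hB2 : ∀ b, (∑ g, if g k = b then w2 g else 0) = d b :=
    key w2 hw2sum (hw2c k (Finset.mem_insert_self k S2))
  set glue : ((Fin N → Bool) × (Fin N → Bool)) → (Fin N → Bool) :=
    fun p i => if i ∈ insert k S1 then p.1 i else p.2 i with hglue
  set F : ((Fin N → Bool) × (Fin N → Bool)) → ℝ :=
    fun p => if p.1 k = p.2 k then w1 p.1 * w2 p.2 / d (p.1 k) else 0 with hF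
  have hFn : ∀ p, 0 ≤ F p := by
    intro p
    simp only [hF]
    split
    · exact div_nonneg (mul_nonneg (hw1n _) (hw2n _)) (hdpos _).le
    · exact le_refl 0
  have hinner1 : ∀ g1, (∑ g2, F (g1, g2)) = w1 g1 := by
    intro g1
    have h : ∀ g2, F (g1, g2) = (w1 g1 / d (g1 k)) * (if g2 k = g1 k then w2 g2 else 0) := by
      intro g2
      simp only [hF]
      by_cases h : g1 k = g2 k
      · rw [if_pos h, if_pos h.symm]; ring
      · rw [if_neg h, if_neg (fun hh => h hh.symm)]; ring
    rw [Finset.sum_congr rfl fun g2 _ => h g2, ← Finset.mul_sum, hB2 (g1 k),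
      div_mul_cancel₀ _ (hdpos (g1 k)).ne']
  have hinner2 : ∀ g2, (∑ g1, F (g1, g2)) = w2 g2 := by
    intro g2
    have h : ∀ g1, F (g1, g2) = (w2 g2 / d (g2 k)) * (if g1 k = g2 k then w1 g1 else 0) := by
      intro g1
      simp only [hF]
      by_cases h : g1 k = g2 k
      · rw [if_pos h, if_pos h, h]; ring
      · rw [if_neg h, if_neg h]; ring
    rw [Finset.sum_congr rfl fun g1 _ => h g1, ← Finset.mul_sum, hB1 (g2 k),
      div_mul_cancel₀ _ (hdpos (g2 k)).ne']
  have hswap : ∀ (i : Fin N),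
      (∑ g, if g i = true then (∑ p, if glue p = g then F p else 0) else 0)
      = ∑ p, if (glue p) i = true then F p else 0 := by
    intro i
    have h : ∀ g, (if g i = true then (∑ p, if glue p = g then F p else 0) else 0)
        = ∑ p, if glue p = g then (if g i = true then F p else 0) else 0 := by
      intro g; split <;> simp
    rw [Finset.sum_congr rfl fun g _ => h g, Finset.sum_comm]
    refine Finset.sum_congr rfl fun p _ => ?_
    rw [Finset.sum_ite_eq Finset.univ (glue p) (fun g => if g i = true then F p else 0),
      if_pos (Finset.mem_univ _)]
  refine ⟨fun g => ∑ p, if glue p = g then F p else 0, ?_, ?_, ?_, ?_⟩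
  · intro g
    refine Finset.sum_nonneg fun p _ => ?_
    split
    · exact hFn p
    · exact le_refl 0
  · intro g hg
    refine Finset.sum_eq_zero fun p _ => ?_
    split
    · rename_i heq
      by_contra hne
      have hcond : p.1 k = p.2 k := by
        by_contra hc
        exact hne (by simp only [hF, if_neg hc])
      have hFval : F p = w1 p.1 * w2 p.2 / d (p.1 k) := by
        simp only [hF, if_pos hcond]
      have hw1ne : w1 p.1 ≠ 0 := by
        intro h0
        exact hne (by rw [hFval, h0, zero_mul, zero_div])
      have hw2ne : w2 p.2 ≠ 0 := by
        intro h0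
        exact hne (by rw [hFval, h0, mul_zero, zero_div])
      have hg1 : p.1 ∈ C1 := by
        by_contra hc; exact hw1ne (hw1s _ hc)
      have hg2 : p.2 ∈ C2 := by
        by_contra hc; exact hw2ne (hw2s _ hc)
      apply hg
      refine ⟨p.1, hg1, p.2, hg2, ?_, ?_⟩
      · intro i hi
        rw [← heq]
        simp only [hglue, if_pos hi]
      · intro i hi
        rw [← heq]
        rcases Finset.mem_insert.mp hi with rfl | hiS
        · simp only [hglue, if_pos (Finset.mem_insert_self i S1)]
          exact hcond
        · have hnot : i ∉ insert k S1 := by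
            intro hmem
            rcases Finset.mem_insert.mp hmem with rfl | hmem'
            · exact hk2 hiS
            · exact (Finset.disjoint_right.mp hdisj hiS) hmem'
          simp only [hglue, if_neg hnot]
    · rfl
  · rw [Finset.sum_comm]
    have h : ∀ p : ((Fin N → Bool) × (Fin N → Bool)),
        (∑ g, if glue p = g then F p else 0) = F p := by
      intro p
      rw [Finset.sum_ite_eq Finset.univ (glue p) (fun _ => F p), if_pos (Finset.mem_univ _)]
    rw [Finset.sum_congr rfl fun p _ => h p, Fintype.sum_prod_type]
    calc (∑ g1, ∑ g2, F (g1, g2)) = ∑ g1, w1 g1 :=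
          Finset.sum_congr rfl fun g1 _ => hinner1 g1
      _ = 1 := hw1sum
  · intro i hi
    rw [hswap i]
    have case1 : ∀ j : Fin N, j ∈ insert k S1 →
        c j = ∑ p, if (glue p) j = true then F p else 0 := by
      intro j hj
      have hgl : ∀ p : ((Fin N → Bool) × (Fin N → Bool)), glue p j = p.1 j := fun p => by
        simp only [hglue]; rw [if_pos hj]
      calc c j = ∑ g1, if g1 j = true then w1 g1 else 0 := hw1c j hj
        _ = ∑ g1, ∑ g2, (if g1 j = true then F (g1, g2) else 0) := by
            refine Finset.sum_congr rfl fun g1 _ => ?_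
            rw [← hinner1 g1]
            split <;> simp
        _ = ∑ p, if (glue p) j = true then F p else 0 := by
            rw [Fintype.sum_prod_type]
            exact Finset.sum_congr rfl fun g1 _ =>
              Finset.sum_congr rfl fun g2 _ => by rw [hgl (g1, g2)]
    rcases Finset.mem_insert.mp hi with rfl | hiU
    · exact case1 i (Finset.mem_insert_self i S1)
    · rcases Finset.mem_union.mp hiU with hiS | hiS
      · exact case1 i (Finset.mem_insert_of_mem hiS)
      · have hnot : i ∉ insert k S1 := by
          intro hmem
          rcases Finset.mem_insert.mp hmem with rfl | hmem'
          · exact hk2 hiS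
          · exact (Finset.disjoint_right.mp hdisj hiS) hmem'
        have hgl : ∀ p : ((Fin N → Bool) × (Fin N → Bool)), glue p i = p.2 i := fun p => by
          simp only [hglue]; rw [if_neg hnot]
        calc c i = ∑ g2, if g2 i = true then w2 g2 else 0 :=
              hw2c i (Finset.mem_insert_of_mem hiS)
          _ = ∑ g2, ∑ g1, (if g2 i = true then F (g1, g2) else 0) := by
              refine Finset.sum_congr rfl fun g2 _ => ?_
              rw [← hinner2 g2]
              split <;> simp
          _ = ∑ p, if (glue p) i = true then F p else 0 := by
              rw [Fintype.sum_prod_type_right]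
              exact Finset.sum_congr rfl fun g2 _ =>
                Finset.sum_congr rfl fun g1 _ => by rw [hgl (g1, g2)]
end

section
/- If the set of constraint nodes merged in forming G' from G induces (together with their direct variable-node neighbors) a cycle-free subgraph of G, then the fundamental polytopes are equal: Q(C) = Q'(C). -/
/-- The (bipartite) Tanner graph on constraint nodes `J` and variable nodes `Fin N`,
with an edge between `j` and `i` iff `i ∈ Nbr j`. -/
def tannerGraph {N : ℕ} {J : Type} (Nbr : J → Finset (Fin N)) :
    SimpleGraph (J ⊕ Fin N) :=
  SimpleGraph.fromRel (fun a b => ∃ j i, a = Sum.inl j ∧ b = Sum.inr i ∧ i ∈ Nbr j)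

open SimpleGraph

lemma exists_cycle_aux {V : Type*} [Fintype V] (G : SimpleGraph V) (S : Set V)
    (hS : S.Nonempty)
    (hdeg : ∀ v ∈ S, ∃ a ∈ S, ∃ b ∈ S, a ≠ b ∧ G.Adj v a ∧ G.Adj v b) :
    ¬ G.IsAcyclic := by
  intro hac
  classical
  have key : ∀ n : ℕ, ∃ (u v : V) (p : G.Walk u v), p.IsPath ∧ p.length = n ∧
      ∀ x ∈ p.support, x ∈ S := by
    intro n
    induction n with
    | zero =>
      obtain ⟨v, hv⟩ := hS
      exact ⟨v, v, .nil, by simp, rfl, by simpa using hv⟩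
    | succ n ih =>
      obtain ⟨u, v, p, hp, hl, hsub⟩ := ih
      have hu : u ∈ S := hsub u p.start_mem_support
      obtain ⟨a, ha, b, hb, hab, hadja, hadjb⟩ := hdeg u hu
      -- pick w adjacent to u with w ∈ S and (p nonnil → w ≠ p.snd)
      cases p with
      | nil =>
        -- n = 0, extend by a
        refine ⟨a, u, Walk.cons hadja.symm .nil, ?_, ?_, ?_⟩
        · simp [Walk.cons_isPath_iff, hadja.ne']
        · simp only [Walk.length_cons, Walk.length_nil] at hl ⊢
          omega
        · intro x hx
          simp only [Walk.support_cons, Walk.support_nil, List.mem_cons] at hx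
          rcases hx with rfl | hx
          · exact ha
          · rcases hx with rfl | hx
            · exact hu
            · simp at hx
      | cons h' q =>
        rename_i x
        set w : V := if a = x then b else a with hw
        have hwS : w ∈ S := by by_cases hax : a = x <;> simp [hw, hax, ha, hb]
        have hadjw : G.Adj u w := by by_cases hax : a = x <;> simp [hw, hax, hadja, hadjb]
        have hwx : w ≠ x := by
          rw [hw]
          split
          · rename_i hax
            exact fun hbx => hab (by rw [hax, hbx])
          · rename_i hax
            exact hax
        by_cases hmem : w ∈ (Walk.cons h' q).support
        · -- build a cycle
          exfalso
          have htp : ((Walk.cons h' q).takeUntil w hmem).IsPath := hp.takeUntil hmem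
          have hne : s(w, u) ∉ ((Walk.cons h' q).takeUntil w hmem).edges := by
            intro hcon
            have hsub' := Walk.edges_takeUntil_subset (Walk.cons h' q) hmem
            have hmem2 : s(w, u) ∈ (Walk.cons h' q).edges := hsub' hcon
            simp only [Walk.edges_cons, List.mem_cons] at hmem2
            rcases hmem2 with heq | hmem3
            · rw [Sym2.eq_iff] at heq
              rcases heq with ⟨h1, h2⟩ | ⟨h1, h2⟩
              · exact hadjw.ne' h1
              · exact hwx h1
            · have : u ∈ q.support := Walk.snd_mem_support_of_mem_edges q hmem3
              rw [Walk.cons_isPath_iff] at hp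
              exact hp.2 this
          have : (Walk.cons hadjw.symm ((Walk.cons h' q).takeUntil w hmem)).IsCycle := by
            rw [Walk.cons_isCycle_iff]
            exact ⟨htp, hne⟩
          exact hac _ this
        · refine ⟨w, v, Walk.cons hadjw.symm (Walk.cons h' q), ?_, ?_, ?_⟩
          · rw [Walk.cons_isPath_iff]
            exact ⟨hp, hmem⟩
          · simp only [Walk.length_cons] at hl ⊢
            omega
          · intro y hy
            simp only [Walk.support_cons, List.mem_cons] at hy
            rcases hy with rfl | hy
            · exact hwS
            · apply hsub
              simpa using hy
  obtain ⟨u, v, p, hp, hl, -⟩ := key (Fintype.card V)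
  have := hp.length_lt
  omega

lemma inLocal_glue {N : ℕ} {S₁ S₂ : Finset (Fin N)} {C₁ C₂ : Set (Fin N → Bool)} {c : Fin N → ℝ}
    (h₁ : ∀ g g' : Fin N → Bool, (∀ i ∈ S₁, g i = g' i) → g ∈ C₁ → g' ∈ C₁)
    (h₂ : ∀ g g' : Fin N → Bool, (∀ i ∈ S₂, g i = g' i) → g ∈ C₂ → g' ∈ C₂)
    (hcard : (S₁ ∩ S₂).card ≤ 1)
    (m₁ : inLocal S₁ C₁ c) (m₂ : inLocal S₂ C₂ c) :
    inLocal (S₁ ∪ S₂) (C₁ ∩ C₂) c := by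
  classical
  obtain ⟨w, hw0, hwC, hw1, hwm⟩ := m₁
  obtain ⟨v, hv0, hvC, hv1, hvm⟩ := m₂
  set d : (Fin N → Bool) → (Fin N → Bool) → Prop :=
    fun g h => ∀ i ∈ S₁ ∩ S₂, g i = h i with hd
  have drefl : ∀ g, d g g := fun g i _ => rfl
  have dsymm : ∀ {g h}, d g h → d h g := fun hgh i hi => (hgh i hi).symm
  have dtrans : ∀ {g h k}, d g h → d h k → d g k := fun hgh hhk i hi =>
    (hgh i hi).trans (hhk i hi)
  set W : (Fin N → Bool) → ℝ := fun h => ∑ g, if d g h then w g else 0 with hW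
  set Vv : (Fin N → Bool) → ℝ := fun h => ∑ g, if d g h then v g else 0 with hV
  have hW0 : ∀ h, 0 ≤ W h := fun h =>
    Finset.sum_nonneg fun g _ => by split; exacts [hw0 g, le_rfl]
  have hV0 : ∀ h, 0 ≤ Vv h := fun h =>
    Finset.sum_nonneg fun g _ => by split; exacts [hv0 g, le_rfl]
  have hle : ∀ g, w g ≤ W g := by
    intro g
    have h0 : ∀ g' : Fin N → Bool, g' ∈ Finset.univ →
        0 ≤ (fun g' => if d g' g then w g' else 0) g' := by
      intro g' _
      dsimp only
      split
      exacts [hw0 g', le_rfl]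
    have := Finset.single_le_sum h0 (Finset.mem_univ g)
    rw [if_pos (drefl g)] at this
    exact this
  have hlev : ∀ g, v g ≤ Vv g := by
    intro g
    have h0 : ∀ g' : Fin N → Bool, g' ∈ Finset.univ →
        0 ≤ (fun g' => if d g' g then v g' else 0) g' := by
      intro g' _
      dsimp only
      split
      exacts [hv0 g', le_rfl]
    have := Finset.single_le_sum h0 (Finset.mem_univ g)
    rw [if_pos (drefl g)] at this
    exact this
  have hWd : ∀ {g h}, d g h → W g = W h := by
    intro g h hgh
    refine Finset.sum_congr rfl fun g' _ => ?_
    have : d g' g ↔ d g' h := ⟨fun h1 => dtrans h1 hgh, fun h1 => dtrans h1 (dsymm hgh)⟩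
    simp only [this]
  have hWV : ∀ h, W h = Vv h := by
    intro h
    rcases Finset.eq_empty_or_nonempty (S₁ ∩ S₂) with hemp | ⟨i, hi⟩
    · have hdall : ∀ g k : Fin N → Bool, d g k := by
        intro g k i hi
        rw [hemp] at hi
        simp at hi
      simp only [hW, hV]
      rw [Finset.sum_congr rfl fun g _ => if_pos (hdall g h),
        Finset.sum_congr rfl fun g _ => if_pos (hdall g h), hw1, hv1]
    · have huniq : ∀ x ∈ S₁ ∩ S₂, x = i := fun x hx => Finset.card_le_one.mp hcard x hx i hi
      have hdiff : ∀ g k : Fin N → Bool, d g k ↔ g i = k i := by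
        intro g k
        constructor
        · exact fun hgk => hgk i hi
        · intro he x hx
          rw [huniq x hx]
          exact he
      have hi1 : i ∈ S₁ := (Finset.mem_inter.mp hi).1
      have hi2 : i ∈ S₂ := (Finset.mem_inter.mp hi).2
      have hsplitw : (∑ g, if (g i = true) then w g else 0)
          + (∑ g, if (g i = false) then w g else 0) = 1 := by
        rw [← Finset.sum_add_distrib, ← hw1]
        refine Finset.sum_congr rfl fun g _ => ?_
        cases hgi : g i <;> simp [hgi]
      have hsplitv : (∑ g, if (g i = true) then v g else 0)
          + (∑ g, if (g i = false) then v g else 0) = 1 := by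
        rw [← Finset.sum_add_distrib, ← hv1]
        refine Finset.sum_congr rfl fun g _ => ?_
        cases hgi : g i <;> simp [hgi]
      have hwi := hwm i hi1
      have hvi := hvm i hi2
      simp only [hW, hV]
      rw [Finset.sum_congr rfl fun g _ => if_congr (hdiff g h) rfl rfl,
        Finset.sum_congr rfl fun g _ => if_congr (hdiff g h) rfl rfl]
      cases hhi : h i
      · have key : (∑ g, if (g i = true) then w g else 0)
            = (∑ g, if (g i = true) then v g else 0) := hwi.symm.trans hvi
        have hfalse : (∑ g, if (g i = false) then w g else 0)
            = (∑ g, if (g i = false) then v g else 0) := by linarith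
        simpa [hhi] using hfalse
      · have key : (∑ g, if (g i = true) then w g else 0)
            = (∑ g, if (g i = true) then v g else 0) := hwi.symm.trans hvi
        simpa [hhi] using key
  set gl : (Fin N → Bool) → (Fin N → Bool) → (Fin N → Bool) :=
    fun g h i => if i ∈ S₂ then h i else g i with hgl
  set r : (Fin N → Bool) → ℝ :=
    fun f => ∑ g, ∑ h, if (f = gl g h ∧ d g h) then w g * v h * (W g)⁻¹ else 0 with hr
  refine ⟨r, ?_, ?_, ?_, ?_⟩
  · intro f
    refine Finset.sum_nonneg fun g _ => Finset.sum_nonneg fun h _ => ?_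
    split
    · exact mul_nonneg (mul_nonneg (hw0 g) (hv0 h)) (inv_nonneg.mpr (hW0 g))
    · exact le_rfl
  · -- support
    intro f hf
    simp only [hr]
    refine Finset.sum_eq_zero fun g _ => Finset.sum_eq_zero fun h _ => ?_
    split
    · rename_i hcond
      obtain ⟨hfgl, hdgh⟩ := hcond
      by_cases hwg : w g = 0
      · rw [hwg]; ring
      by_cases hvh : v h = 0
      · rw [hvh]; ring
      exfalso
      apply hf
      have hgC : g ∈ C₁ := by by_contra hg; exact hwg (hwC g hg)
      have hhC : h ∈ C₂ := by by_contra hh; exact hvh (hvC h hh)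
      constructor
      · refine h₁ g f (fun i hiS => ?_) hgC
        rw [hfgl]
        by_cases hiS2 : i ∈ S₂
        · simp only [hgl]
          rw [if_pos hiS2]
          exact hdgh i (Finset.mem_inter.mpr ⟨hiS, hiS2⟩)
        · simp only [hgl]
          rw [if_neg hiS2]
      · refine h₂ h f (fun i hiS => ?_) hhC
        rw [hfgl]
        simp only [hgl]
        rw [if_pos hiS]
    · rfl
  · -- total mass
    simp only [hr]
    rw [Finset.sum_comm]
    have step1 : ∀ g : Fin N → Bool,
        (∑ f : Fin N → Bool, ∑ h : Fin N → Bool,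
          if (f = gl g h ∧ d g h) then w g * v h * (W g)⁻¹ else 0)
        = ∑ h : Fin N → Bool, if d g h then w g * v h * (W g)⁻¹ else 0 := by
      intro g
      rw [Finset.sum_comm]
      refine Finset.sum_congr rfl fun h _ => ?_
      by_cases hdgh : d g h
      · rw [Finset.sum_congr rfl fun f _ => if_congr (and_iff_left hdgh) rfl rfl,
          Finset.sum_ite_eq' Finset.univ (gl g h) fun _ => w g * v h * (W g)⁻¹,
          if_pos (Finset.mem_univ _), if_pos hdgh]
      · rw [if_neg hdgh]
        refine Finset.sum_eq_zero fun f _ => ?_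
        rw [if_neg]
        rintro ⟨-, hc⟩
        exact hdgh hc
    rw [Finset.sum_congr rfl fun g _ => step1 g]
    have step2 : ∀ g : Fin N → Bool,
        (∑ h : Fin N → Bool, if d g h then w g * v h * (W g)⁻¹ else 0) = w g := by
      intro g
      have e : (∑ h : Fin N → Bool, if d g h then w g * v h * (W g)⁻¹ else 0)
          = (w g * (W g)⁻¹) * ∑ h : Fin N → Bool, if d h g then v h else 0 := by
        rw [Finset.mul_sum]
        refine Finset.sum_congr rfl fun h _ => ?_
        by_cases hdgh : d g h
        · rw [if_pos hdgh, if_pos (dsymm hdgh)]; ring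
        · rw [if_neg hdgh, if_neg (fun hc => hdgh (dsymm hc)), mul_zero]
      rw [e]
      have hVg : (∑ h : Fin N → Bool, if d h g then v h else 0) = Vv g := rfl
      rw [hVg, ← hWV g]
      by_cases hWg : W g = 0
      · have : w g = 0 := le_antisymm (hWg ▸ hle g) (hw0 g)
        rw [this, hWg]; ring
      · field_simp
    rw [Finset.sum_congr rfl fun g _ => step2 g]
    exact hw1
  · -- marginals
    intro i hiu
    simp only [hr]
    have swap : (∑ f : Fin N → Bool, if f i = true then
        (∑ g : Fin N → Bool, ∑ h : Fin N → Bool,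
          if (f = gl g h ∧ d g h) then w g * v h * (W g)⁻¹ else 0) else 0)
        = ∑ g : Fin N → Bool, ∑ h : Fin N → Bool,
          if (gl g h i = true ∧ d g h) then w g * v h * (W g)⁻¹ else 0 := by
      have e1 : ∀ f : Fin N → Bool, (if f i = true then
          (∑ g : Fin N → Bool, ∑ h : Fin N → Bool,
            if (f = gl g h ∧ d g h) then w g * v h * (W g)⁻¹ else 0) else 0)
          = ∑ g : Fin N → Bool, ∑ h : Fin N → Bool,
            if (f = gl g h ∧ (gl g h i = true ∧ d g h)) then w g * v h * (W g)⁻¹ else 0 := by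
        intro f
        by_cases hfi : f i = true
        · rw [if_pos hfi]
          refine Finset.sum_congr rfl fun g _ => Finset.sum_congr rfl fun h _ => ?_
          refine if_congr ?_ rfl rfl
          constructor
          · rintro ⟨rfl, hd'⟩
            exact ⟨rfl, hfi, hd'⟩
          · rintro ⟨rfl, _, hd'⟩
            exact ⟨rfl, hd'⟩
        · rw [if_neg hfi]
          symm
          refine Finset.sum_eq_zero fun g _ => Finset.sum_eq_zero fun h _ => ?_
          rw [if_neg]
          rintro ⟨rfl, hgi, -⟩
          exact hfi hgi
      rw [Finset.sum_congr rfl fun f _ => e1 f]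
      rw [Finset.sum_comm]
      refine Finset.sum_congr rfl fun g _ => ?_
      rw [Finset.sum_comm]
      refine Finset.sum_congr rfl fun h _ => ?_
      by_cases hcond : gl g h i = true ∧ d g h
      · rw [Finset.sum_congr rfl fun f _ => if_congr (and_iff_left hcond) rfl rfl,
          Finset.sum_ite_eq' Finset.univ (gl g h) fun _ => w g * v h * (W g)⁻¹,
          if_pos (Finset.mem_univ _), if_pos hcond]
      · rw [if_neg hcond]
        refine Finset.sum_eq_zero fun f _ => ?_
        rw [if_neg]
        rintro ⟨-, hc⟩
        exact hcond hc
    rw [swap]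
    by_cases hiS2 : i ∈ S₂
    · have e2 : ∀ g h : Fin N → Bool, gl g h i = h i := fun g h => by simp [hgl, hiS2]
      rw [Finset.sum_comm]
      have e3 : ∀ h : Fin N → Bool,
          (∑ g : Fin N → Bool, if (gl g h i = true ∧ d g h) then w g * v h * (W g)⁻¹ else 0)
          = if h i = true then v h else 0 := by
        intro h
        by_cases hhi : h i = true
        · have e : (∑ g : Fin N → Bool,
              if (gl g h i = true ∧ d g h) then w g * v h * (W g)⁻¹ else 0)
              = (v h * (W h)⁻¹) * ∑ g : Fin N → Bool, if d g h then w g else 0 := by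
            rw [Finset.mul_sum]
            refine Finset.sum_congr rfl fun g _ => ?_
            by_cases hdgh : d g h
            · rw [if_pos ⟨(e2 g h).trans hhi, hdgh⟩, if_pos hdgh, hWd hdgh]
              ring
            · rw [if_neg (fun hc => hdgh hc.2), if_neg hdgh, mul_zero]
          have hWh : (∑ g : Fin N → Bool, if d g h then w g else 0) = W h := rfl
          rw [e, hWh, if_pos hhi]
          by_cases hW0' : W h = 0
          · have hVh0 : Vv h = 0 := by rw [← hWV h]; exact hW0'
            have hvh0 : v h = 0 := le_antisymm (hVh0 ▸ hlev h) (hv0 h)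
            rw [hvh0, hW0']
            ring
          · field_simp
        · rw [if_neg hhi]
          refine Finset.sum_eq_zero fun g _ => ?_
          rw [if_neg]
          rintro ⟨hc, -⟩
          exact hhi ((e2 g h).symm.trans hc)
      rw [Finset.sum_congr rfl fun h _ => e3 h]
      exact hvm i hiS2
    · have hiS1 : i ∈ S₁ := by
        rcases Finset.mem_union.mp hiu with h | h
        · exact h
        · exact absurd h hiS2
      have e2 : ∀ g h : Fin N → Bool, gl g h i = g i := fun g h => by simp [hgl, hiS2]
      have e3 : ∀ g : Fin N → Bool,
          (∑ h : Fin N → Bool, if (gl g h i = true ∧ d g h) then w g * v h * (W g)⁻¹ else 0)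
          = if g i = true then w g else 0 := by
        intro g
        by_cases hgi : g i = true
        · have e : (∑ h : Fin N → Bool,
              if (gl g h i = true ∧ d g h) then w g * v h * (W g)⁻¹ else 0)
              = (w g * (W g)⁻¹) * ∑ h : Fin N → Bool, if d h g then v h else 0 := by
            rw [Finset.mul_sum]
            refine Finset.sum_congr rfl fun h _ => ?_
            by_cases hdgh : d g h
            · rw [if_pos ⟨(e2 g h).trans hgi, hdgh⟩, if_pos (dsymm hdgh)]
              ring
            · rw [if_neg (fun hc => hdgh hc.2), if_neg (fun hc => hdgh (dsymm hc)), mul_zero]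
          have hVg : (∑ h : Fin N → Bool, if d h g then v h else 0) = Vv g := rfl
          rw [e, hVg, ← hWV g, if_pos hgi]
          by_cases hW0' : W g = 0
          · have hwg0 : w g = 0 := le_antisymm (hW0' ▸ hle g) (hw0 g)
            rw [hwg0, hW0']
            ring
          · field_simp
        · rw [if_neg hgi]
          refine Finset.sum_eq_zero fun h _ => ?_
          rw [if_neg]
          rintro ⟨hc, -⟩
          exact hgi ((e2 g h).symm.trans hc)
      rw [Finset.sum_congr rfl fun g _ => e3 g]
      exact hwm i hiS1

lemma leaf_exists {N : ℕ} {J J' : Type} [Fintype J] [DecidableEq J]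
    (Nbr : J → Finset (Fin N)) (m : J → J') (j' : J')
    (hK : ((tannerGraph Nbr).induce
      {x | ∃ j, m j = j' ∧ (x = Sum.inl j ∨ ∃ i ∈ Nbr j, x = Sum.inr i)}).IsAcyclic)
    (T : Finset J) (hT : ∀ j ∈ T, m j = j') (hTne : T.Nonempty) :
    ∃ j₀ ∈ T, (Nbr j₀ ∩ (T.erase j₀).biUnion Nbr).card ≤ 1 := by
  classical
  by_contra hno
  push_neg at hno
  haveI : Fintype (↥{x : J ⊕ Fin N |
      ∃ j, m j = j' ∧ (x = Sum.inl j ∨ ∃ i ∈ Nbr j, x = Sum.inr i)}) := Fintype.ofFinite _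
  refine (exists_cycle_aux _
    {x | (∃ j ∈ T, x.1 = Sum.inl j) ∨
      (∃ i j k, j ∈ T ∧ k ∈ T ∧ j ≠ k ∧ i ∈ Nbr j ∧ i ∈ Nbr k ∧ x.1 = Sum.inr i)}
    ?_ ?_) hK
  · obtain ⟨j₀, hj₀⟩ := hTne
    exact ⟨⟨Sum.inl j₀, ⟨j₀, hT j₀ hj₀, Or.inl rfl⟩⟩, Or.inl ⟨j₀, hj₀, rfl⟩⟩
  · rintro ⟨x, hxU⟩ hxS
    rcases hxS with ⟨j, hjT, hx⟩ | ⟨i, j, k, hjT, hkT, hjk, hij, hik, hx⟩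
    · -- constraint node with ≥ 2 shared variables
      subst hx
      have h2 := hno j hjT
      rw [Finset.one_lt_card] at h2
      obtain ⟨i₁, hi₁, i₂, hi₂, hne⟩ := h2
      obtain ⟨hi₁N, hi₁B⟩ := Finset.mem_inter.mp hi₁
      obtain ⟨hi₂N, hi₂B⟩ := Finset.mem_inter.mp hi₂
      obtain ⟨k₁, hk₁e, hk₁⟩ := Finset.mem_biUnion.mp hi₁B
      obtain ⟨k₂, hk₂e, hk₂⟩ := Finset.mem_biUnion.mp hi₂B
      refine ⟨⟨Sum.inr i₁, ⟨j, hT j hjT, Or.inr ⟨i₁, hi₁N, rfl⟩⟩⟩, ?_,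
        ⟨Sum.inr i₂, ⟨j, hT j hjT, Or.inr ⟨i₂, hi₂N, rfl⟩⟩⟩, ?_, ?_, ?_, ?_⟩
      · exact Or.inr ⟨i₁, j, k₁, hjT, Finset.mem_of_mem_erase hk₁e,
          fun he => (Finset.mem_erase.mp hk₁e).1 he.symm, hi₁N, hk₁, rfl⟩
      · exact Or.inr ⟨i₂, j, k₂, hjT, Finset.mem_of_mem_erase hk₂e,
          fun he => (Finset.mem_erase.mp hk₂e).1 he.symm, hi₂N, hk₂, rfl⟩
      · intro hcon
        exact hne (Sum.inr.inj (congrArg Subtype.val hcon))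
      · show (tannerGraph Nbr).Adj (Sum.inl j) (Sum.inr i₁)
        rw [tannerGraph, SimpleGraph.fromRel_adj]
        exact ⟨by simp, Or.inl ⟨j, i₁, rfl, rfl, hi₁N⟩⟩
      · show (tannerGraph Nbr).Adj (Sum.inl j) (Sum.inr i₂)
        rw [tannerGraph, SimpleGraph.fromRel_adj]
        exact ⟨by simp, Or.inl ⟨j, i₂, rfl, rfl, hi₂N⟩⟩
    · -- shared variable node
      subst hx
      refine ⟨⟨Sum.inl j, ⟨j, hT j hjT, Or.inl rfl⟩⟩, Or.inl ⟨j, hjT, rfl⟩,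
        ⟨Sum.inl k, ⟨k, hT k hkT, Or.inl rfl⟩⟩, Or.inl ⟨k, hkT, rfl⟩, ?_, ?_, ?_⟩
      · intro hcon
        exact hjk (Sum.inl.inj (congrArg Subtype.val hcon))
      · show (tannerGraph Nbr).Adj (Sum.inr i) (Sum.inl j)
        rw [tannerGraph, SimpleGraph.fromRel_adj]
        exact ⟨by simp, Or.inr ⟨j, i, rfl, rfl, hij⟩⟩
      · show (tannerGraph Nbr).Adj (Sum.inr i) (Sum.inl k)
        rw [tannerGraph, SimpleGraph.fromRel_adj]
        exact ⟨by simp, Or.inr ⟨k, i, rfl, rfl, hik⟩⟩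


/-- if each group of merged constraint nodes, together with their direct
variable-node neighbors, induces a cycle-free subgraph of the Tanner graph `G`
(and each constituent code depends only on the coordinates of its neighborhood),
then merging does not change the fundamental polytope: `Q(C) = Q'(C)`. -/
theorem merged_polytope_eq_of_acyclic
    {N : ℕ} {J J' : Type} [Fintype J] [DecidableEq J']
    (Nbr : J → Finset (Fin N)) (C : J → Set (Fin N → Bool))
    (hrestr : ∀ j, ∀ g g' : Fin N → Bool,
      (∀ i ∈ Nbr j, g i = g' i) → g ∈ C j → g' ∈ C j)
    (m : J → J')
    (hacyclic : ∀ j' : J',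
      ((tannerGraph Nbr).induce
        {x | ∃ j, m j = j' ∧ (x = Sum.inl j ∨ ∃ i ∈ Nbr j, x = Sum.inr i)}).IsAcyclic)
    (c : Fin N → ℝ) (hbox : ∀ i, 0 ≤ c i ∧ c i ≤ 1) :
    (∀ j, inLocal (Nbr j) (C j) c) ↔
      (∀ j' : J',
        inLocal (Finset.univ.biUnion fun j => if m j = j' then Nbr j else ∅)
          {g | ∀ j, m j = j' → g ∈ C j} c) := by
  classical
  constructor
  · intro hloc j'
    have main : ∀ T : Finset J, (∀ j ∈ T, m j = j') →
        inLocal (T.biUnion Nbr) {g | ∀ j ∈ T, g ∈ C j} c := by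
      intro T
      induction T using Finset.strongInduction with
      | _ T IH =>
        intro hT
        rcases Finset.eq_empty_or_nonempty T with rfl | hTne
        · refine ⟨fun g => if g = (fun _ => false) then 1 else 0, ?_, ?_, ?_, ?_⟩
          · intro g
            dsimp only
            split
            exacts [zero_le_one, le_rfl]
          · intro g hg
            exfalso
            apply hg
            intro j hj
            exact absurd hj (Finset.notMem_empty j)
          · rw [Finset.sum_ite_eq' Finset.univ (fun _ => false) (fun _ => (1:ℝ))]
            simp
          · intro i hi
            simp at hi
        · obtain ⟨j₀, hj₀T, hcard⟩ := leaf_exists Nbr m j' (hacyclic j') T hT hTne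
          have hrec := IH (T.erase j₀) (Finset.erase_ssubset hj₀T)
            (fun j hj => hT j (Finset.mem_of_mem_erase hj))
          have hglue := inLocal_glue (S₂ := (T.erase j₀).biUnion Nbr)
            (C₂ := {g | ∀ j ∈ T.erase j₀, g ∈ C j}) (hrestr j₀)
            (fun g g' hgg' hg j hj => hrestr j g g'
              (fun i hi => hgg' i (Finset.mem_biUnion.mpr ⟨j, hj, hi⟩)) (hg j hj))
            hcard (hloc j₀) hrec
          have e1 : T.biUnion Nbr = Nbr j₀ ∪ (T.erase j₀).biUnion Nbr := by
            conv_lhs => rw [← Finset.insert_erase hj₀T]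
            rw [Finset.biUnion_insert]
          have e2 : {g : Fin N → Bool | ∀ j ∈ T, g ∈ C j}
              = C j₀ ∩ {g | ∀ j ∈ T.erase j₀, g ∈ C j} := by
            ext g
            constructor
            · intro hg
              exact ⟨hg j₀ hj₀T, fun j hj => hg j (Finset.mem_of_mem_erase hj)⟩
            · rintro ⟨hg0, hg⟩ j hj
              by_cases hjj : j = j₀
              · rw [hjj]
                exact hg0
              · exact hg j (Finset.mem_erase.mpr ⟨hjj, hj⟩)
          rw [e1, e2]
          exact hglue
    have hmain := main (Finset.univ.filter fun j => m j = j')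
      (fun j hj => (Finset.mem_filter.mp hj).2)
    have e1 : (Finset.univ.filter fun j => m j = j').biUnion Nbr
        = Finset.univ.biUnion fun j => if m j = j' then Nbr j else ∅ := by
      ext i
      constructor
      · intro h
        obtain ⟨j, hj, hi⟩ := Finset.mem_biUnion.mp h
        have hmj := (Finset.mem_filter.mp hj).2
        exact Finset.mem_biUnion.mpr ⟨j, Finset.mem_univ j, by rw [if_pos hmj]; exact hi⟩
      · intro h
        obtain ⟨j, -, hi⟩ := Finset.mem_biUnion.mp h
        by_cases hj : m j = j'
        · rw [if_pos hj] at hi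
          exact Finset.mem_biUnion.mpr ⟨j, Finset.mem_filter.mpr ⟨Finset.mem_univ j, hj⟩, hi⟩
        · rw [if_neg hj] at hi
          simp at hi
    have e2 : {g : Fin N → Bool | ∀ j ∈ Finset.univ.filter fun j => m j = j', g ∈ C j}
        = {g | ∀ j, m j = j' → g ∈ C j} := by
      ext g
      simp [Finset.mem_filter]
    rw [e1, e2] at hmain
    exact hmain
  · intro hmer j
    obtain ⟨w, hw0, hwC, hw1, hwm⟩ := hmer (m j)
    refine ⟨w, hw0, ?_, hw1, ?_⟩
    · intro g hg
      exact hwC g fun hgmem => hg (hgmem j rfl)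
    · intro i hi
      refine hwm i (Finset.mem_biUnion.mpr ⟨j, Finset.mem_univ j, ?_⟩)
      rw [if_pos rfl]
      exact hi
end

section
/- The minimum of the linear functional Σ_{i∈I} γ_i c_i over the fundamental polytope Q(C) (Problem-P) equals the maximum of D(u) = Σ_{j∈J} min_{g∈C_j} Σ_{i∈N_j} u_{i,j} g_i over all u satisfying Σ_{j∈N_i} u_{i,j} = γ_i for all i (Problem-D); i.e., strong LP duality holds between Problem-P and Problem-D. -/
open Finset

section carath
variable {E : Type*} [AddCommGroup E] [Module ℝ E] {K : Type*} [Fintype K] [DecidableEq K]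

lemma cone_carath_aux (v : K → E) : ∀ (n : ℕ) (z : K → ℝ), (∀ k, 0 ≤ z k) →
    (Finset.univ.filter (fun k => z k ≠ 0)).card ≤ n →
    ∃ (t : Finset K) (z' : K → ℝ), (∀ k, 0 ≤ z' k) ∧ (∀ k ∉ t, z' k = 0) ∧
      LinearIndependent ℝ (fun k : t => v k) ∧ ∑ k, z' k • v k = ∑ k, z k • v k := by
  intro n
  induction n with
  | zero =>
    intro z hz hcard
    refine ⟨∅, z, hz, ?_, ?_, rfl⟩
    · intro k _
      have hemp : Finset.univ.filter (fun k => z k ≠ 0) = ∅ :=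
        Finset.card_eq_zero.mp (Nat.le_zero.mp hcard)
      by_contra h
      have : k ∈ Finset.univ.filter (fun k => z k ≠ 0) := by simp [h]
      rw [hemp] at this
      exact absurd this (Finset.notMem_empty k)
    · exact linearIndependent_empty_type
  | succ n ih =>
    intro z hz hcard
    set t : Finset K := Finset.univ.filter (fun k => z k ≠ 0) with ht
    by_cases hli : LinearIndependent ℝ (fun k : t => v (k : K))
    · exact ⟨t, z, hz, fun k hk => by simpa [ht] using hk, hli, rfl⟩
    · obtain ⟨g, hgsum, kne, hkne⟩ := Fintype.not_linearIndependent_iff.mp hli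
      -- extend g to K
      have key : ∀ G : K → ℝ, (∀ k, k ∉ t → G k = 0) → (∑ k, G k • v k = 0) →
          (∃ k, 0 < G k) → ∃ (t' : Finset K) (z' : K → ℝ), (∀ k, 0 ≤ z' k) ∧
            (∀ k ∉ t', z' k = 0) ∧ LinearIndependent ℝ (fun k : t' => v (k:K)) ∧
            ∑ k, z' k • v k = ∑ k, z k • v k := by
        intro G hGsupp hGsum hGpos
        obtain ⟨k₁, hk₁⟩ := hGpos
        have hne : (Finset.univ.filter (fun k => 0 < G k)).Nonempty := ⟨k₁, by simp [hk₁]⟩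
        obtain ⟨k₀, hk₀mem, hk₀min⟩ := Finset.exists_min_image _ (fun k => z k / G k) hne
        have hGk₀ : 0 < G k₀ := by simpa using hk₀mem
        set r := z k₀ / G k₀ with hr
        have hr0 : 0 ≤ r := div_nonneg (hz k₀) hGk₀.le
        set z'' : K → ℝ := fun k => z k - r * G k with hz''
        have hz''nonneg : ∀ k, 0 ≤ z'' k := by
          intro k
          by_cases h : 0 < G k
          · have := hk₀min k (by simp [h])
            have : r ≤ z k / G k := this
            simpa [hz'', sub_nonneg] using (le_div_iff₀ h).mp this
          · push_neg at h
            have : r * G k ≤ 0 := mul_nonpos_of_nonneg_of_nonpos hr0 h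
            simp only [hz'']
            linarith [hz k]
        have hz''k₀ : z'' k₀ = 0 := by
          simp only [hz'', hr]
          field_simp
          ring
        have hsupp : Finset.univ.filter (fun k => z'' k ≠ 0) ⊆ t.erase k₀ := by
          intro k hk
          simp only [Finset.mem_filter] at hk
          rw [Finset.mem_erase]
          constructor
          · rintro rfl; exact hk.2 hz''k₀
          · by_contra hkt
            have h1 : z k = 0 := by
              by_contra h; exact hkt (by simp [ht, h])
            have h2 : G k = 0 := hGsupp k hkt
            exact hk.2 (by simp [hz'', h1, h2])
        have hk₀t : k₀ ∈ t := by
          by_contra h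
          exact absurd (hGsupp k₀ h) (ne_of_gt hGk₀)
        have hcard' : (Finset.univ.filter (fun k => z'' k ≠ 0)).card ≤ n := by
          calc _ ≤ (t.erase k₀).card := Finset.card_le_card hsupp
          _ = t.card - 1 := Finset.card_erase_of_mem hk₀t
          _ ≤ n := by omega
        obtain ⟨t', z', h1, h2, h3, h4⟩ := ih z'' hz''nonneg hcard'
        refine ⟨t', z', h1, h2, h3, ?_⟩
        rw [h4]
        simp only [hz'', sub_smul, Finset.sum_sub_distrib, mul_smul]
        rw [← Finset.smul_sum, hGsum, smul_zero, sub_zero]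
      -- define extension
      set G : K → ℝ := fun k => if h : k ∈ t then g ⟨k, h⟩ else 0 with hG
      have hGsupp : ∀ k, k ∉ t → G k = 0 := fun k hk => by simp [hG, hk]
      have hGsum : ∑ k, G k • v k = 0 := by
        rw [← Finset.sum_subset (Finset.subset_univ t)
          (fun k _ hk => by rw [hGsupp k hk, zero_smul])]
        rw [← Finset.sum_attach t (fun k => G k • v k)]
        simpa [hG] using hgsum
      by_cases hpos : ∃ k, 0 < G k
      · exact key G hGsupp hGsum hpos
      · push_neg at hpos
        refine key (fun k => -G k) (fun k hk => by simp [hGsupp k hk]) (by simpa using hGsum) ?_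
        refine ⟨(kne : K), ?_⟩
        have h1 : G kne ≠ 0 := by simpa [hG] using hkne
        have := hpos kne
        simp only [neg_pos]
        exact lt_of_le_of_ne this h1

lemma cone_carath (v : K → E) (z : K → ℝ) (hz : ∀ k, 0 ≤ z k) :
    ∃ (t : Finset K) (z' : K → ℝ), (∀ k, 0 ≤ z' k) ∧ (∀ k ∉ t, z' k = 0) ∧
      LinearIndependent ℝ (fun k : t => v (k:K)) ∧ ∑ k, z' k • v k = ∑ k, z k • v k :=
  cone_carath_aux v _ z hz le_rfl

end carath

open Finset Set

section closed
variable {E : Type*} [NormedAddCommGroup E] [NormedSpace ℝ E] {K : Type*} [Fintype K]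

/-- the linear map sending coefficients to the combination -/
noncomputable def comboMap (v : K → E) : (K → ℝ) →ₗ[ℝ] E where
  toFun z := ∑ k, z k • v k
  map_add' x y := by simp [add_smul, Finset.sum_add_distrib]
  map_smul' c x := by simp [Finset.smul_sum, mul_smul]

lemma isClosed_cone (v : K → E) :
    IsClosed {x : E | ∃ z : K → ℝ, (∀ k, 0 ≤ z k) ∧ ∑ k, z k • v k = x} := by
  classical
  have hz_ext : ∀ (t : Finset K) (z : K → ℝ), (∀ k ∉ t, z k = 0) →
      ∑ k, z k • v k = ∑ k : t, z k • v (k : K) := by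
    intro t z hsupp
    rw [← Finset.sum_subset (Finset.subset_univ t)
      (fun k _ hk => by rw [hsupp k hk, zero_smul])]
    exact (Finset.sum_attach t (fun k => z k • v k)).symm
  have hrw : {x : E | ∃ z : K → ℝ, (∀ k, 0 ≤ z k) ∧ ∑ k, z k • v k = x}
      = ⋃ t ∈ {t : Finset K | LinearIndependent ℝ (fun k : t => v (k : K))},
          (fun z : t → ℝ => ∑ k : t, z k • v (k : K)) '' {z | ∀ k, 0 ≤ z k} := by
    ext x
    simp only [Set.mem_setOf_eq, Set.mem_iUnion, Set.mem_image, exists_prop]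
    constructor
    · rintro ⟨z, hz, rfl⟩
      obtain ⟨t, z', h1, h2, h3, h4⟩ := cone_carath v z hz
      exact ⟨t, h3, fun k => z' k, fun k => h1 k, by rw [← h4, hz_ext t z' h2]⟩
    · rintro ⟨t, ht, z, hz, rfl⟩
      refine ⟨fun k => if h : k ∈ t then z ⟨k, h⟩ else 0,
        fun k => by dsimp only; split; exacts [hz _, le_rfl], ?_⟩
      rw [hz_ext t _ (fun k hk => by simp [hk])]
      exact Finset.sum_congr rfl (fun k _ => by simp)
  rw [hrw]
  refine Set.Finite.isClosed_biUnion (Set.toFinite _) ?_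
  intro t ht
  have hinj : LinearMap.ker (comboMap (fun k : t => v (k : K))) = ⊥ := by
    rw [LinearMap.ker_eq_bot']
    intro z hz
    exact funext (Fintype.linearIndependent_iff.mp ht z hz)
  have hce := LinearMap.isClosedEmbedding_of_injective hinj
  have hcl : IsClosed {z : t → ℝ | ∀ k, 0 ≤ z k} := by
    have : {z : t → ℝ | ∀ k, 0 ≤ z k} = Set.univ.pi (fun _ => Set.Ici (0:ℝ)) := by
      ext z; simp [Set.mem_pi, Pi.le_def, Subtype.forall]
    rw [this]
    exact isClosed_set_pi (fun a _ => isClosed_Ici)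
  exact hce.isClosedMap _ hcl

end closed

section farkas
variable {E : Type*} [NormedAddCommGroup E] [InnerProductSpace ℝ E] [CompleteSpace E]
  {K : Type*} [Fintype K]

open scoped InnerProductSpace in
lemma coneFarkas (v : K → E) (b : E) :
    (∃ z : K → ℝ, (∀ k, 0 ≤ z k) ∧ ∑ k, z k • v k = b) ∨
    (∃ y : E, (∀ k, 0 ≤ ⟪v k, y⟫_ℝ) ∧ ⟪b, y⟫_ℝ < 0) := by
  classical
  by_cases hb : ∃ z : K → ℝ, (∀ k, 0 ≤ z k) ∧ ∑ k, z k • v k = b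
  · exact Or.inl hb
  · right
    set S : ConvexCone ℝ E :=
      { carrier := {x : E | ∃ z : K → ℝ, (∀ k, 0 ≤ z k) ∧ ∑ k, z k • v k = x}
        smul_mem' := by
          rintro c hc x ⟨z, hz, rfl⟩
          exact ⟨fun k => c * z k, fun k => mul_nonneg hc.le (hz k),
            by simp only [mul_smul, ← Finset.smul_sum]⟩
        add_mem' := by
          rintro x ⟨z, hz, rfl⟩ y ⟨z', hz', rfl⟩
          exact ⟨fun k => z k + z' k, fun k => add_nonneg (hz k) (hz' k),
            by simp [add_smul, Finset.sum_add_distrib]⟩ } with hS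
    have hne : (S : Set E).Nonempty := ⟨0, fun _ => 0, fun _ => le_rfl, by simp⟩
    have hcl : IsClosed (S : Set E) := isClosed_cone v
    have hbS : b ∉ S := hb
    obtain ⟨y, hy1, hy2⟩ :=
      ProperCone.hyperplane_separation' (E := E)
        ({ carrier := (S : Set E), add_mem' := fun hx hy => S.add_mem' hx hy,
           zero_mem' := hne.elim fun _ _ => ⟨fun _ => 0, fun _ => le_rfl, by simp⟩,
           smul_mem' := by
             rintro c x ⟨z, hz, rfl⟩
             exact ⟨fun k => (c : ℝ) * z k, fun k => mul_nonneg c.2 (hz k),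
               by simp only [mul_smul, ← Finset.smul_sum]; rfl⟩,
           isClosed' := hcl } : ProperCone ℝ E) hbS
    refine ⟨y, fun k => ?_, hy2⟩
    refine hy1 (v k) ⟨fun k' => if k' = k then 1 else 0, fun k' => by positivity, ?_⟩
    simp

/-- Coordinate version of the Farkas alternative. -/
lemma farkas_pi {T : Type*} [Fintype T] (v : K → T → ℝ) (b : T → ℝ) :
    (∃ z : K → ℝ, (∀ k, 0 ≤ z k) ∧ ∀ t, ∑ k, z k * v k t = b t) ∨
    (∃ y : T → ℝ, (∀ k, 0 ≤ ∑ t, v k t * y t) ∧ ∑ t, b t * y t < 0) := by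
  classical
  set L := (WithLp.linearEquiv 2 ℝ (T → ℝ)).symm with hL
  have hLapp : ∀ (x : T → ℝ) (t : T), (L x : EuclideanSpace ℝ T) t = x t := fun x t => rfl
  have hinner : ∀ x y : T → ℝ,
      (inner ℝ (L x) (L y) : ℝ) = ∑ t, x t * y t := by
    intro x y
    rw [PiLp.inner_apply]
    exact Finset.sum_congr rfl fun t _ => by simp [hLapp, RCLike.inner_apply, mul_comm]
  rcases coneFarkas (E := EuclideanSpace ℝ T) (fun k => L (v k)) (L b) with ⟨z, hz, hsum⟩ | ⟨y, hy1, hy2⟩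
  · left
    refine ⟨z, hz, fun t => ?_⟩
    have h2 : ∑ k, z k • v k = b := by
      have := congrArg (WithLp.linearEquiv 2 ℝ (T → ℝ)) hsum
      rw [map_sum] at this
      simpa [hL] using this
    have := congrFun h2 t
    rwa [Finset.sum_apply] at this
  · right
    set y' := (WithLp.linearEquiv 2 ℝ (T → ℝ)) y with hy'
    have hyy : L y' = y := by simp [hy', hL]
    refine ⟨y', fun k => ?_, ?_⟩
    · have := hy1 k
      rwa [← hyy, hinner] at this
    · have := hy2
      rwa [← hyy, hinner] at this

open Finset Set

section primal
variable {N : ℕ} {J : Type} [Fintype J]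

lemma primal_isLeast (Nbr : J → Finset (Fin N)) (C : J → Finset (Fin N → Bool))
    (hcover : ∀ i : Fin N, ∃ j, i ∈ Nbr j) (γ : Fin N → ℝ)
    (hfeas : ∃ (c : Fin N → ℝ) (w : J → (Fin N → Bool) → ℝ),
      (∀ j g, 0 ≤ w j g) ∧ (∀ j, ∑ g ∈ C j, w j g = 1) ∧
      (∀ j, ∀ i ∈ Nbr j, c i = ∑ g ∈ (C j).filter (fun g => g i = true), w j g)) :
    ∃ p : ℝ, IsLeast {x : ℝ | ∃ (c : Fin N → ℝ) (w : J → (Fin N → Bool) → ℝ),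
          (∀ j g, 0 ≤ w j g) ∧ (∀ j, ∑ g ∈ C j, w j g = 1) ∧
          (∀ j, ∀ i ∈ Nbr j, c i = ∑ g ∈ (C j).filter (fun g => g i = true), w j g) ∧
          x = ∑ i, γ i * c i} p := by
  classical
  set Feas : Set (Fin N → ℝ) := {c | ∀ j : J, ∃ w : (Fin N → Bool) → ℝ,
      (∀ g, 0 ≤ w g) ∧ (∑ g ∈ C j, w g = 1) ∧
      ∀ i ∈ Nbr j, c i = ∑ g ∈ (C j).filter (fun g => g i = true), w g} with hFeas
  -- Feas is closed
  have hclosed : IsClosed Feas := by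
    have : Feas = ⋂ j : J, (fun (c : Fin N → ℝ) (i : {i // i ∈ Nbr j}) => c i.1) ⁻¹'
        ((fun (w : (Fin N → Bool) → ℝ) (i : {i // i ∈ Nbr j}) =>
            ∑ g ∈ (C j).filter (fun g => g i.1 = true), w g) ''
          {w | (∀ g, 0 ≤ w g) ∧ (∀ g ∉ C j, w g = 0) ∧ ∑ g ∈ C j, w g = 1}) := by
      ext c
      simp only [hFeas, Set.mem_setOf_eq, Set.mem_iInter, Set.mem_preimage, Set.mem_image]
      refine forall_congr' fun j => ⟨?_, ?_⟩
      · rintro ⟨w, hw0, hw1, hwc⟩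
        refine ⟨fun g => if g ∈ C j then w g else 0,
          ⟨fun g => by dsimp only; split; exacts [hw0 g, le_rfl],
           fun g hg => by simp [hg], ?_⟩, ?_⟩
        · rw [← hw1]; exact Finset.sum_congr rfl fun g hg => by simp [hg]
        · funext i
          rw [hwc i.1 i.2]
          exact Finset.sum_congr rfl fun g hg =>
            by simp [(Finset.mem_filter.mp hg).1]
      · rintro ⟨w, ⟨hw0, _, hw1⟩, hwim⟩
        exact ⟨w, hw0, hw1, fun i hi => (congrFun hwim ⟨i, hi⟩).symm⟩
    rw [this]
    refine isClosed_iInter fun j => IsClosed.preimage ?_ ?_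
    · exact continuous_pi fun i => continuous_apply i.1
    · refine IsCompact.isClosed (IsCompact.image ?_ ?_)
      · refine IsCompact.of_isClosed_subset
          (isCompact_univ_pi fun _ => isCompact_Icc (a := (0:ℝ)) (b := 1)) ?_ ?_
        · have hrw : {w : (Fin N → Bool) → ℝ | (∀ g, 0 ≤ w g) ∧ (∀ g ∉ C j, w g = 0) ∧
              ∑ g ∈ C j, w g = 1} =
              (⋂ g, {w : (Fin N → Bool) → ℝ | 0 ≤ w g}) ∩
              ((⋂ g ∈ {g | g ∉ C j}, {w : (Fin N → Bool) → ℝ | w g = 0}) ∩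
                {w : (Fin N → Bool) → ℝ | ∑ g ∈ C j, w g = 1}) := by
            ext w
            simp only [Set.mem_inter_iff, Set.mem_iInter, Set.mem_setOf_eq]
          rw [hrw]
          refine IsClosed.inter (isClosed_iInter fun g =>
            isClosed_le continuous_const (continuous_apply g)) (IsClosed.inter ?_ ?_)
          · exact isClosed_biInter fun g _ =>
              isClosed_eq (continuous_apply g) continuous_const
          · exact isClosed_eq
              (continuous_finset_sum _ fun g _ => continuous_apply g) continuous_const
        · rintro w ⟨hw0, hwsupp, hwsum⟩
          rw [Set.mem_univ_pi]
          intro g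
          refine ⟨hw0 g, ?_⟩
          by_cases hg : g ∈ C j
          · rw [← hwsum]
            exact Finset.single_le_sum (fun g' _ => hw0 g') hg
          · rw [hwsupp g hg]; exact zero_le_one
      · exact continuous_pi fun i => continuous_finset_sum _ fun g _ => continuous_apply g
  -- Feas is bounded
  have hsub : Feas ⊆ Set.univ.pi (fun _ => Set.Icc (0:ℝ) 1) := by
    intro c hc
    rw [Set.mem_univ_pi]
    intro i
    obtain ⟨j, hj⟩ := hcover i
    obtain ⟨w, hw0, hw1, hwc⟩ := hc j
    rw [hwc i hj]
    constructor
    · exact Finset.sum_nonneg fun g _ => hw0 g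
    · rw [← hw1]
      exact Finset.sum_le_sum_of_subset_of_nonneg (Finset.filter_subset _ _)
        (fun g _ _ => hw0 g)
  have hcomp : IsCompact Feas :=
    IsCompact.of_isClosed_subset (isCompact_univ_pi fun _ => isCompact_Icc) hclosed hsub
  have hne : Feas.Nonempty := by
    obtain ⟨c, w, h1, h2, h3⟩ := hfeas
    exact ⟨c, fun j => ⟨w j, h1 j, h2 j, h3 j⟩⟩
  obtain ⟨cs, hcs, hmin⟩ := hcomp.exists_isMinOn hne
    (Continuous.continuousOn (continuous_finset_sum _ fun i _ =>
      continuous_const.mul (continuous_apply i)))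
  refine ⟨∑ i, γ i * cs i, ?_, ?_⟩
  · choose w hw1 hw2 hw3 using hcs
    exact ⟨cs, w, hw1, hw2, hw3, rfl⟩
  · rintro x ⟨c, w, h1, h2, h3, rfl⟩
    exact hmin (fun j => ⟨w j, h1 j, h2 j, h3 j⟩)

end primal

open Finset Set

section weak
variable {N : ℕ} {J : Type} [Fintype J]

lemma filter_mem_and {α : Type*} [Fintype α] [DecidableEq α] (s : Finset α) (q : α → Prop)
    [DecidablePred q] :
    Finset.univ.filter (fun a => a ∈ s ∧ q a) = s.filter q := by
  ext a; simp

lemma double_count (Nbr : J → Finset (Fin N)) (f : Fin N → J → ℝ) :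
    ∑ j, ∑ i ∈ Nbr j, f i j
      = ∑ i, ∑ j ∈ Finset.univ.filter (fun j => i ∈ Nbr j), f i j := by
  classical
  have h1 : ∀ j, ∑ i ∈ Nbr j, f i j = ∑ i, if i ∈ Nbr j then f i j else 0 := by
    intro j
    rw [← Finset.sum_filter]
    congr 1
    ext i; simp
  have h2 : ∀ i, ∑ j ∈ Finset.univ.filter (fun j => i ∈ Nbr j), f i j
      = ∑ j, if i ∈ Nbr j then f i j else 0 := fun i => Finset.sum_filter _ _
  simp only [h1, h2]
  exact Finset.sum_comm

lemma weak_duality (Nbr : J → Finset (Fin N)) (C : J → Finset (Fin N → Bool))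
    (hCne : ∀ j, (C j).Nonempty) (γ : Fin N → ℝ)
    (c : Fin N → ℝ) (w : J → (Fin N → Bool) → ℝ)
    (h1 : ∀ j g, 0 ≤ w j g) (h2 : ∀ j, ∑ g ∈ C j, w j g = 1)
    (h3 : ∀ j, ∀ i ∈ Nbr j, c i = ∑ g ∈ (C j).filter (fun g => g i = true), w j g)
    (u : Fin N → J → ℝ)
    (hu : ∀ i, ∑ j ∈ Finset.univ.filter (fun j => i ∈ Nbr j), u i j = γ i) :
    ∑ j, (C j).inf' (hCne j)
        (fun g => ∑ i ∈ Nbr j, u i j * (if g i = true then 1 else 0))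
      ≤ ∑ i, γ i * c i := by
  classical
  have step1 : ∀ j, (C j).inf' (hCne j)
      (fun g => ∑ i ∈ Nbr j, u i j * (if g i = true then 1 else 0))
      ≤ ∑ i ∈ Nbr j, u i j * c i := by
    intro j
    set m := (C j).inf' (hCne j)
      (fun g => ∑ i ∈ Nbr j, u i j * (if g i = true then 1 else 0)) with hm
    calc m = ∑ g ∈ C j, w j g * m := by
            rw [← Finset.sum_mul, h2 j, one_mul]
      _ ≤ ∑ g ∈ C j, w j g * (∑ i ∈ Nbr j, u i j * (if g i = true then 1 else 0)) := by
            refine Finset.sum_le_sum fun g hg => ?_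
            exact mul_le_mul_of_nonneg_left (Finset.inf'_le _ hg) (h1 j g)
      _ = ∑ i ∈ Nbr j, u i j * c i := by
            simp_rw [Finset.mul_sum]
            rw [Finset.sum_comm]
            refine Finset.sum_congr rfl fun i hi => ?_
            rw [h3 j i hi, Finset.mul_sum, Finset.sum_filter]
            refine Finset.sum_congr rfl fun g hg => ?_
            by_cases hgi : g i = true <;> simp [hgi] <;> ring
  calc ∑ j, (C j).inf' (hCne j)
        (fun g => ∑ i ∈ Nbr j, u i j * (if g i = true then 1 else 0))
      ≤ ∑ j, ∑ i ∈ Nbr j, u i j * c i := Finset.sum_le_sum fun j _ => step1 j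
    _ = ∑ i, ∑ j ∈ Finset.univ.filter (fun j => i ∈ Nbr j), u i j * c i :=
        double_count Nbr _
    _ = ∑ i, γ i * c i := by
        refine Finset.sum_congr rfl fun i _ => ?_
        rw [← Finset.sum_mul, hu i]

end weak

open Finset Set




/-- strong LP duality between Problem-P and Problem-D for a GLDPC
code with variable nodes `Fin N`, constraint nodes `J`, neighborhoods `Nbr j` and
nonempty constituent codes `C j`.  Assuming every variable node has a constraint
neighbor and Problem-P is feasible, the minimum of `∑ γ i * c i` over the
fundamental polytope (Problem-P) exists, the maximum of
`D(u) = ∑_j min_{g ∈ C j} ∑_{i ∈ N_j} u i j * g i` over the dual-feasible `u`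
(Problem-D) exists, and the two are equal. -/
theorem problemP_problemD_strong_duality
    {N : ℕ} {J : Type} [Fintype J]
    (Nbr : J → Finset (Fin N)) (C : J → Finset (Fin N → Bool))
    (hCne : ∀ j, (C j).Nonempty)
    (hcover : ∀ i : Fin N, ∃ j, i ∈ Nbr j)
    (γ : Fin N → ℝ)
    (hfeas : ∃ (c : Fin N → ℝ) (w : J → (Fin N → Bool) → ℝ),
      (∀ j g, 0 ≤ w j g) ∧ (∀ j, ∑ g ∈ C j, w j g = 1) ∧
      (∀ j, ∀ i ∈ Nbr j, c i = ∑ g ∈ (C j).filter (fun g => g i = true), w j g)) :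
    ∃ p : ℝ,
      IsLeast {x : ℝ | ∃ (c : Fin N → ℝ) (w : J → (Fin N → Bool) → ℝ),
          (∀ j g, 0 ≤ w j g) ∧ (∀ j, ∑ g ∈ C j, w j g = 1) ∧
          (∀ j, ∀ i ∈ Nbr j, c i = ∑ g ∈ (C j).filter (fun g => g i = true), w j g) ∧
          x = ∑ i, γ i * c i} p ∧
      IsGreatest {x : ℝ | ∃ u : Fin N → J → ℝ,
          (∀ i, ∑ j ∈ Finset.univ.filter (fun j => i ∈ Nbr j), u i j = γ i) ∧
          x = ∑ j, (C j).inf' (hCne j)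
              (fun g => ∑ i ∈ Nbr j, u i j * (if g i = true then 1 else 0))} p := by
  classical
  obtain ⟨p, hP⟩ := primal_isLeast Nbr C hcover γ hfeas
  refine ⟨p, hP, ?_⟩
  -- the dual objective
  set D : (Fin N → J → ℝ) → ℝ := fun u => ∑ j, (C j).inf' (hCne j)
      (fun g => ∑ i ∈ Nbr j, u i j * (if g i = true then 1 else 0)) with hD
  -- upper bound part of IsGreatest, from weak duality against the primal optimum
  obtain ⟨cs, ws, hws1, hws2, hws3, hval⟩ := hP.1
  have hub : ∀ x ∈ {x : ℝ | ∃ u : Fin N → J → ℝ,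
      (∀ i, ∑ j ∈ Finset.univ.filter (fun j => i ∈ Nbr j), u i j = γ i) ∧ x = D u}, x ≤ p := by
    rintro x ⟨u, hu, rfl⟩
    rw [hval]
    exact weak_duality Nbr C hCne γ cs ws hws1 hws2 hws3 u hu
  -- generators for the Farkas system
  set T := Option (J ⊕ (Fin N × J)) with hT
  set Av : Fin N → T → ℝ := fun i t =>
    match t with
    | none => γ i
    | some (Sum.inl _) => 0
    | some (Sum.inr (i', j)) => if i = i' ∧ i' ∈ Nbr j then 1 else 0 with hAvdef
  set Wv : J → (Fin N → Bool) → T → ℝ := fun j g t =>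
    match t with
    | none => 0
    | some (Sum.inl j') => if j' = j ∧ g ∈ C j then 1 else 0
    | some (Sum.inr (i, j')) =>
        if j' = j ∧ (i ∈ Nbr j ∧ (g ∈ C j ∧ g i = true)) then -1 else 0 with hWvdef
  set Pv : T → ℝ := fun t =>
    match t with
    | none => -p
    | some (Sum.inl _) => -1
    | some (Sum.inr _) => 0 with hPvdef
  set bstar : T → ℝ := fun t =>
    match t with
    | none => -1
    | some _ => 0 with hbdef
  set v : ((Fin N ⊕ Fin N) ⊕ ((J × (Fin N → Bool)) ⊕ Unit)) → T → ℝ :=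
    Sum.elim (Sum.elim Av (fun i t => -Av i t))
      (Sum.elim (fun q => Wv q.1 q.2) (fun _ => Pv)) with hv
  have sum_T_split : ∀ f : T → ℝ,
      ∑ t, f t = f none + (∑ j, f (some (Sum.inl j)) + ∑ i, ∑ j, f (some (Sum.inr (i, j)))) := by
    intro f
    rw [show (Finset.univ : Finset T) = (Finset.univ : Finset (Option (J ⊕ (Fin N × J)))) from rfl]
    rw [Fintype.sum_option, Fintype.sum_sum_type, Fintype.sum_prod_type]
  have sum_K_split : ∀ f : ((Fin N ⊕ Fin N) ⊕ ((J × (Fin N → Bool)) ⊕ Unit)) → ℝ,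
      ∑ k, f k = (∑ i, f (.inl (.inl i)) + ∑ i, f (.inl (.inr i)))
        + ((∑ j, ∑ g, f (.inr (.inl (j, g)))) + f (.inr (.inr ()))) := by
    intro f
    rw [Fintype.sum_sum_type, Fintype.sum_sum_type, Fintype.sum_sum_type,
      Fintype.sum_prod_type]
    simp
  -- inner product computations for the separation case
  have hAvsum : ∀ (i : Fin N) (y : T → ℝ),
      ∑ t, Av i t * y t
        = γ i * y none + ∑ j ∈ Finset.univ.filter (fun j => i ∈ Nbr j),
            y (some (Sum.inr (i, j))) := by
    intro i y
    rw [sum_T_split]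
    simp only [hAvdef]
    rw [Finset.sum_comm]
    simp [ite_and, ite_mul, Finset.sum_ite_eq, Finset.sum_filter]
  have hWvsum : ∀ (j : J) (g : Fin N → Bool) (y : T → ℝ), g ∈ C j →
      ∑ t, Wv j g t * y t
        = y (some (Sum.inl j))
          - ∑ i ∈ (Nbr j).filter (fun i => g i = true), y (some (Sum.inr (i, j))) := by
    intro j g y hg
    rw [sum_T_split]
    simp only [hWvdef]
    rw [Finset.sum_comm]
    simp [ite_and, ite_mul, Finset.sum_ite_eq, Finset.sum_ite_eq', hg, Finset.sum_filter,
      sub_eq_add_neg, Finset.sum_neg_distrib]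
    rw [← Finset.sum_neg_distrib]
    exact Finset.sum_congr rfl fun x _ => by split <;> simp
  have hPvsum : ∀ y : T → ℝ,
      ∑ t, Pv t * y t = -p * y none - ∑ j, y (some (Sum.inl j)) := by
    intro y
    rw [sum_T_split]
    simp only [hPvdef]
    simp [sub_eq_add_neg, Finset.sum_neg_distrib]
  have hbsum : ∀ y : T → ℝ, ∑ t, bstar t * y t = -(y none) := by
    intro y
    rw [sum_T_split]
    simp only [hbdef]
    simp
  rcases farkas_pi v bstar with ⟨z, hz, hrows⟩ | ⟨y, hy, hby⟩
  · -- membership case: contradiction with primal optimality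
    exfalso
    set zp : Fin N → ℝ := fun i => z (.inl (.inl i)) with hzp
    set zm : Fin N → ℝ := fun i => z (.inl (.inr i)) with hzm
    set zw : J → (Fin N → Bool) → ℝ := fun j g => z (.inr (.inl (j, g))) with hzw
    set z' : ℝ := z (.inr (.inr ())) with hz'
    -- row: some (inl j)
    have row1 : ∀ j, ∑ g ∈ C j, zw j g = z' := by
      intro j
      have := hrows (some (Sum.inl j))
      rw [sum_K_split] at this
      simp only [hv, Sum.elim_inl, Sum.elim_inr, hAvdef, hWvdef, hPvdef, hbdef] at this
      simp only [mul_zero, mul_neg, mul_one, Finset.sum_const_zero, mul_ite,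
        ite_and] at this
      rw [Finset.sum_comm] at this
      simp [Finset.sum_ite_eq, Finset.sum_ite_mem] at this
      linarith [this]
    -- row: some (inr (i,j))
    have row2 : ∀ (i : Fin N) (j : J), i ∈ Nbr j →
        zp i - zm i = ∑ g ∈ (C j).filter (fun g => g i = true), zw j g := by
      intro i j hij
      have := hrows (some (Sum.inr (i, j)))
      rw [sum_K_split] at this
      simp only [hv, Sum.elim_inl, Sum.elim_inr, hAvdef, hWvdef, hPvdef, hbdef] at this
      simp only [mul_ite, mul_one, mul_zero, mul_neg, ite_and, Finset.sum_ite_eq,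
        Finset.mem_univ, if_true, hij] at this
      rw [Finset.sum_comm] at this
      simp [Finset.sum_ite_eq, hij, filter_mem_and] at this
      rw [Finset.sum_filter]
      have h3 : ∑ x ∈ C j, (if x i = true then -z (Sum.inr (Sum.inl (j, x))) else 0)
          = -∑ x ∈ C j, (if x i = true then z (Sum.inr (Sum.inl (j, x))) else 0) := by
        rw [← Finset.sum_neg_distrib]
        exact Finset.sum_congr rfl fun x _ => by split <;> simp
      rw [h3] at this
      simp only [hzp, hzm, hzw]
      linarith
    -- row: none
    have row3 : ∑ i, zp i * γ i - ∑ i, zm i * γ i - z' * p = -1 := by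
      have := hrows none
      rw [sum_K_split] at this
      simp only [hv, Sum.elim_inl, Sum.elim_inr, hAvdef, hWvdef, hPvdef, hbdef] at this
      simp only [mul_zero, mul_neg, Finset.sum_const_zero, zero_add, add_zero] at this
      simp only [hzp, hzm, hzw, hz']
      rw [Finset.sum_neg_distrib] at this
      linarith [this]
    by_cases hz'0 : z' = 0
    · -- degenerate: 0 = -1
      have hzw0 : ∀ j, ∀ g ∈ C j, zw j g = 0 := by
        intro j g hg
        have hsum := row1 j
        rw [hz'0] at hsum
        exact (Finset.sum_eq_zero_iff_of_nonneg (fun g' _ => hz _)).mp hsum g hg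
      have hd : ∀ i, zp i - zm i = 0 := by
        intro i
        obtain ⟨j, hj⟩ := hcover i
        rw [row2 i j hj]
        exact Finset.sum_eq_zero fun g hg => hzw0 j g (Finset.mem_of_mem_filter g hg)
      have h4 : ∑ i, zp i * γ i - ∑ i, zm i * γ i = 0 := by
        rw [← Finset.sum_sub_distrib]
        refine Finset.sum_eq_zero fun i _ => ?_
        rw [← sub_mul, hd i, zero_mul]
      rw [h4, hz'0] at row3
      norm_num at row3
    · have hz'pos : 0 < z' := lt_of_le_of_ne (hz _) (Ne.symm hz'0)
      -- build a primal feasible point with value < p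
      have hmem : (p - 1 / z') ∈ {x : ℝ | ∃ (c : Fin N → ℝ) (w : J → (Fin N → Bool) → ℝ),
          (∀ j g, 0 ≤ w j g) ∧ (∀ j, ∑ g ∈ C j, w j g = 1) ∧
          (∀ j, ∀ i ∈ Nbr j, c i = ∑ g ∈ (C j).filter (fun g => g i = true), w j g) ∧
          x = ∑ i, γ i * c i} := by
        refine ⟨fun i => (zp i - zm i) / z', fun j g => zw j g / z',
          fun j g => div_nonneg (hz _) hz'pos.le, ?_, ?_, ?_⟩
        · intro j
          dsimp only
          rw [← Finset.sum_div, row1 j, div_self hz'0]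
        · intro j i hij
          dsimp only
          rw [← Finset.sum_div, ← row2 i j hij]
        · dsimp only
          have h5 : ∑ i, γ i * ((zp i - zm i) / z') = (∑ i, γ i * (zp i - zm i)) / z' := by
            rw [Finset.sum_div]
            exact Finset.sum_congr rfl fun i _ => (mul_div_assoc _ _ _).symm
          rw [h5]
          have h6 : ∑ i, γ i * (zp i - zm i) = z' * p - 1 := by
            have h7 : ∑ i, γ i * (zp i - zm i) = ∑ i, zp i * γ i - ∑ i, zm i * γ i := by
              rw [← Finset.sum_sub_distrib]
              exact Finset.sum_congr rfl fun i _ => by ring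
            rw [h7]
            linarith [row3]
          rw [h6]
          field_simp
      have := hP.2 hmem
      have h8 : 0 < 1 / z' := by positivity
      linarith
  · -- separation case: construct the optimal dual solution
    set s := y none with hs
    have hspos : 0 < s := by
      have := hby
      rw [hbsum] at this
      linarith
    set u : Fin N → J → ℝ := fun i j => -y (some (Sum.inr (i, j))) / s with hu
    have hufeas : ∀ i, ∑ j ∈ Finset.univ.filter (fun j => i ∈ Nbr j), u i j = γ i := by
      intro i
      have hA1 := hy (Sum.inl (Sum.inl i))
      have hA2 := hy (Sum.inl (Sum.inr i))
      simp only [hv, Sum.elim_inl, Sum.elim_inr] at hA1 hA2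
      rw [hAvsum] at hA1
      have hA2' : ∑ t, -Av i t * y t = -(∑ t, Av i t * y t) := by
        rw [← Finset.sum_neg_distrib]
        exact Finset.sum_congr rfl fun t _ => by ring
      rw [hA2', hAvsum] at hA2
      have hE : γ i * s + ∑ j ∈ Finset.univ.filter (fun j => i ∈ Nbr j),
          y (some (Sum.inr (i, j))) = 0 := by
        rw [hs]; linarith
      simp only [hu]
      rw [← Finset.sum_div]
      rw [Finset.sum_neg_distrib]
      have h9 : -∑ j ∈ Finset.univ.filter (fun j => i ∈ Nbr j),
          y (some (Sum.inr (i, j))) = γ i * s := by linarith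
      rw [h9, mul_div_assoc, div_self (ne_of_gt hspos), mul_one]
    have hbound : ∀ j, -y (some (Sum.inl j)) / s ≤ (C j).inf' (hCne j)
        (fun g => ∑ i ∈ Nbr j, u i j * (if g i = true then 1 else 0)) := by
      intro j
      refine Finset.le_inf' _ _ fun g hg => ?_
      have hWg := hy (Sum.inr (Sum.inl (j, g)))
      simp only [hv, Sum.elim_inl, Sum.elim_inr] at hWg
      rw [hWvsum j g y hg] at hWg
      have h10 : ∑ i ∈ Nbr j, u i j * (if g i = true then 1 else 0)
          = (-∑ i ∈ (Nbr j).filter (fun i => g i = true), y (some (Sum.inr (i, j)))) / s := by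
        rw [← Finset.sum_neg_distrib, Finset.sum_div]
        rw [Finset.sum_filter]
        refine Finset.sum_congr rfl fun i _ => ?_
        simp only [hu]
        split <;> simp
      rw [h10]
      have hle : -y (some (Sum.inl j))
          ≤ -∑ i ∈ (Nbr j).filter (fun i => g i = true), y (some (Sum.inr (i, j))) := by
        linarith
      exact div_le_div_of_nonneg_right hle hspos.le
    have hDup : p ≤ ∑ j, (C j).inf' (hCne j)
        (fun g => ∑ i ∈ Nbr j, u i j * (if g i = true then 1 else 0)) := by
      have hPc := hy (Sum.inr (Sum.inr ()))
      simp only [hv, Sum.elim_inl, Sum.elim_inr] at hPc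
      rw [hPvsum] at hPc
      calc p = (p * s) / s := by
              rw [mul_div_assoc, div_self (ne_of_gt hspos), mul_one]
        _ ≤ (-∑ j, y (some (Sum.inl j))) / s := by
              refine div_le_div_of_nonneg_right ?_ hspos.le
              rw [hs]
              nlinarith [hPc]
        _ = ∑ j, -y (some (Sum.inl j)) / s := by
              rw [← Finset.sum_neg_distrib, Finset.sum_div]
        _ ≤ _ := Finset.sum_le_sum fun j _ => hbound j
    have hmemD : D u ∈ {x : ℝ | ∃ u : Fin N → J → ℝ,
        (∀ i, ∑ j ∈ Finset.univ.filter (fun j => i ∈ Nbr j), u i j = γ i) ∧ x = D u} :=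
      ⟨u, hufeas, rfl⟩
    have hle' : D u ≤ p := hub _ hmemD
    have hge' : p ≤ D u := by rw [hD]; exact hDup
    have heq : D u = p := le_antisymm hle' hge'
    exact ⟨⟨u, hufeas, by rw [← heq, hD]⟩, hub⟩
end farkas
end

section
/- For a single parity check code C_j = {g ∈ {0,1}^{N_j} : Σ_i g_i even}, a vector c lies in the convex hull of C_j if and only if 0 ≤ c_i ≤ 1 for all i ∈ N_j and, for every odd-sized subset S ⊆ N_j, Σ_{i∈N_j∖S} c_i + Σ_{i∈S}(1−c_i) ≥ 1. -/
lemma inLocal_combo {N : ℕ} (S : Finset (Fin N)) (C : Set (Fin N → Bool))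
    (a b c : Fin N → ℝ) (l : ℝ) (hl0 : 0 ≤ l) (hl1 : l ≤ 1)
    (ha : inLocal S C a) (hb : inLocal S C b)
    (hc : ∀ i ∈ S, c i = l * a i + (1 - l) * b i) : inLocal S C c := by
  obtain ⟨wa, hwa0, hwaS, hwa1, hwam⟩ := ha
  obtain ⟨wb, hwb0, hwbS, hwb1, hwbm⟩ := hb
  refine ⟨fun g => l * wa g + (1 - l) * wb g, ?_, ?_, ?_, ?_⟩
  · intro g
    show 0 ≤ l * wa g + (1 - l) * wb g
    have := hwa0 g; have := hwb0 g
    nlinarith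
  · intro g hg
    show l * wa g + (1 - l) * wb g = 0
    rw [hwaS g hg, hwbS g hg]; ring
  · rw [Finset.sum_add_distrib, ← Finset.mul_sum, ← Finset.mul_sum, hwa1, hwb1]; ring
  · intro i hi
    have h1 : ∀ g : Fin N → Bool, (if g i = true then l * wa g + (1 - l) * wb g else 0)
        = l * (if g i = true then wa g else 0) + (1 - l) * (if g i = true then wb g else 0) := by
      intro g; split <;> ring
    simp only [h1]
    rw [Finset.sum_add_distrib, ← Finset.mul_sum, ← Finset.mul_sum, ← hwam i hi, ← hwbm i hi]
    exact hc i hi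

lemma forward_dir {N : ℕ} (S : Finset (Fin N)) (c : Fin N → ℝ)
    (h : inLocal S {g : Fin N → Bool | Even ((S.filter (fun i => g i = true)).card)} c) :
    ((∀ i ∈ S, 0 ≤ c i ∧ c i ≤ 1) ∧
      ∀ T ⊆ S, Odd T.card → 1 ≤ ∑ i ∈ S \ T, c i + ∑ i ∈ T, (1 - c i)) := by
  obtain ⟨w, hw0, hwS, hw1, hwm⟩ := h
  constructor
  · intro i hi
    rw [hwm i hi]
    constructor
    · exact Finset.sum_nonneg fun g _ => by split <;> [exact hw0 g; exact le_refl 0]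
    · rw [← hw1]
      exact Finset.sum_le_sum fun g _ => by split <;> [exact le_refl _; exact hw0 g]
  · intro T hT hodd
    have hA : ∀ i ∈ S \ T, c i = ∑ g, (if g i = true then w g else 0) := by
      intro i hi; exact hwm i (Finset.mem_sdiff.mp hi).1
    have hB : ∀ i ∈ T, (1 - c i) = ∑ g, (if g i = false then w g else 0) := by
      intro i hi
      rw [hwm i (hT hi), ← hw1, ← Finset.sum_sub_distrib]
      refine Finset.sum_congr rfl fun g _ => ?_
      cases hgi : g i <;> simp
    have key : ∑ i ∈ S \ T, c i + ∑ i ∈ T, (1 - c i)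
        = ∑ g, ((∑ i ∈ S \ T, if g i = true then w g else 0)
            + ∑ i ∈ T, if g i = false then w g else 0) := by
      rw [Finset.sum_add_distrib, Finset.sum_comm, Finset.sum_comm (s := Finset.univ)]
      rw [Finset.sum_congr rfl hA, Finset.sum_congr rfl hB]
    rw [key, ← hw1]
    refine Finset.sum_le_sum fun g _ => ?_
    by_cases hg : g ∈ {g : Fin N → Bool | Even ((S.filter (fun i => g i = true)).card)}
    · -- there is a witness index
      have hex : (∃ i ∈ S \ T, g i = true) ∨ (∃ i ∈ T, g i = false) := by
        by_contra hcon
        push_neg at hcon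
        obtain ⟨h1, h2⟩ := hcon
        have : S.filter (fun i => g i = true) = T := by
          ext i
          simp only [Finset.mem_filter]
          constructor
          · rintro ⟨hiS, hgi⟩
            by_contra hiT
            exact (h1 i (Finset.mem_sdiff.mpr ⟨hiS, hiT⟩)) hgi
          · intro hiT
            refine ⟨hT hiT, ?_⟩
            cases hgi : g i
            · exact absurd hgi (h2 i hiT)
            · rfl
        rw [Set.mem_setOf_eq, this] at hg
        exact (Nat.not_even_iff_odd.mpr hodd) hg
      have n1 : (0:ℝ) ≤ ∑ i ∈ S \ T, if g i = true then w g else 0 :=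
        Finset.sum_nonneg fun i _ => by split <;> [exact hw0 g; exact le_refl 0]
      have n2 : (0:ℝ) ≤ ∑ i ∈ T, if g i = false then w g else 0 :=
        Finset.sum_nonneg fun i _ => by split <;> [exact hw0 g; exact le_refl 0]
      rcases hex with ⟨i, hi, hgi⟩ | ⟨i, hi, hgi⟩
      · have : w g ≤ ∑ i ∈ S \ T, if g i = true then w g else 0 := by
          have := Finset.single_le_sum (f := fun i => if g i = true then w g else 0)
            (fun i _ => by split <;> [exact hw0 g; exact le_refl 0]) hi
          simpa [hgi] using this
        linarith
      · have : w g ≤ ∑ i ∈ T, if g i = false then w g else 0 := by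
          have := Finset.single_le_sum (f := fun i => if g i = false then w g else 0)
            (fun i _ => by split <;> [exact hw0 g; exact le_refl 0]) hi
          simpa [hgi] using this
        linarith
    · rw [hwS g hg]
      have n1 : (0:ℝ) ≤ ∑ i ∈ S \ T, if g i = true then (0:ℝ) else 0 := by simp
      simp

lemma tight_case {N : ℕ} (S : Finset (Fin N)) (c : Fin N → ℝ)
    (hbox : ∀ i ∈ S, 0 ≤ c i ∧ c i ≤ 1)
    (T : Finset (Fin N)) (hT : T ⊆ S) (hodd : Odd T.card)
    (htight : ∑ i ∈ S \ T, c i + ∑ i ∈ T, (1 - c i) = 1) :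
    inLocal S {g : Fin N → Bool | Even ((S.filter (fun i => g i = true)).card)} c := by
  classical
  set t : Fin N → ℝ := fun i => if i ∈ T then 1 - c i else c i with ht
  set G : Fin N → (Fin N → Bool) := fun i k => if k = i then !(decide (k ∈ T)) else (decide (k ∈ T)) with hG
  have htnn : ∀ i ∈ S, 0 ≤ t i := by
    intro i hi
    obtain ⟨h0, h1⟩ := hbox i hi
    simp only [ht]; split <;> linarith
  have htsum : ∑ i ∈ S, t i = 1 := by
    rw [← Finset.sum_sdiff hT]
    have e1 : ∑ i ∈ S \ T, t i = ∑ i ∈ S \ T, c i :=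
      Finset.sum_congr rfl fun i hi => by
        simp only [ht]; rw [if_neg (Finset.mem_sdiff.mp hi).2]
    have e2 : ∑ i ∈ T, t i = ∑ i ∈ T, (1 - c i) :=
      Finset.sum_congr rfl fun i hi => by simp only [ht]; rw [if_pos hi]
    rw [e1, e2]; linarith
  have hGmem : ∀ i ∈ S, Even ((S.filter (fun k => G i k = true)).card) := by
    intro i hi
    by_cases hiT : i ∈ T
    · have : S.filter (fun k => G i k = true) = T.erase i := by
        ext k
        simp only [Finset.mem_filter, Finset.mem_erase, hG]
        constructor
        · rintro ⟨hkS, hk⟩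
          by_cases hki : k = i
          · rw [if_pos hki, hki] at hk; simp [hiT] at hk
          · rw [if_neg hki] at hk; exact ⟨hki, by simpa using hk⟩
        · rintro ⟨hki, hkT⟩
          exact ⟨hT hkT, by rw [if_neg hki]; simpa using hkT⟩
      rw [this, Finset.card_erase_of_mem hiT]
      obtain ⟨m, hm⟩ := hodd
      exact ⟨m, by omega⟩
    · have : S.filter (fun k => G i k = true) = insert i T := by
        ext k
        simp only [Finset.mem_filter, Finset.mem_insert, hG]
        constructor
        · rintro ⟨hkS, hk⟩
          by_cases hki : k = i
          · exact Or.inl hki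
          · rw [if_neg hki] at hk; exact Or.inr (by simpa using hk)
        · rintro (hki | hkT)
          · exact ⟨hki ▸ hi, by rw [if_pos hki, hki]; simp [hiT]⟩
          · refine ⟨hT hkT, ?_⟩
            have hki : k ≠ i := fun h => hiT (h ▸ hkT)
            rw [if_neg hki]; simpa using hkT
      rw [this, Finset.card_insert_of_notMem hiT]
      obtain ⟨m, hm⟩ := hodd
      exact ⟨m + 1, by omega⟩
  have hGinj : ∀ i j : Fin N, G i = G j → i = j := by
    intro i j hij
    by_contra hne
    have h1 := congrFun hij i
    simp only [hG] at h1
    rw [if_neg (fun h : i = j => hne h)] at h1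
    simp at h1
  refine ⟨fun g => ∑ i ∈ S, if g = G i then t i else 0, ?_, ?_, ?_, ?_⟩
  · intro g
    exact Finset.sum_nonneg fun i hi => by
      split <;> [exact htnn i hi; exact le_refl 0]
  · intro g hg
    apply Finset.sum_eq_zero
    intro i hi
    rw [if_neg]
    intro hgi
    exact hg (hgi ▸ (hGmem i hi))
  · rw [Finset.sum_comm]
    rw [← htsum]
    refine Finset.sum_congr rfl fun i _ => ?_
    rw [Finset.sum_ite_eq' Finset.univ (G i) (fun _ => t i)]
    simp
  · intro k hk
    have step : ∀ g : Fin N → Bool,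
        (if g k = true then (∑ i ∈ S, if g = G i then t i else 0) else 0)
          = ∑ i ∈ S, if g = G i ∧ G i k = true then t i else 0 := by
      intro g
      by_cases hgk : g k = true
      · rw [if_pos hgk]
        refine Finset.sum_congr rfl fun i _ => ?_
        by_cases h : g = G i
        · rw [if_pos h, if_pos ⟨h, by rw [← h]; exact hgk⟩]
        · rw [if_neg h, if_neg (fun hc => h hc.1)]
      · rw [if_neg hgk]
        symm
        apply Finset.sum_eq_zero
        intro i _
        rw [if_neg]
        rintro ⟨h1, h2⟩
        exact hgk (by rw [h1]; exact h2)
    simp only [step]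
    rw [Finset.sum_comm]
    have collapse : ∀ i ∈ S, (∑ g : Fin N → Bool, if g = G i ∧ G i k = true then t i else 0)
        = if G i k = true then t i else 0 := by
      intro i _
      by_cases hP : G i k = true
      · rw [if_pos hP]
        have : ∀ g : Fin N → Bool, (if g = G i ∧ G i k = true then t i else 0)
            = if g = G i then t i else 0 := by
          intro g
          by_cases h : g = G i
          · rw [if_pos ⟨h, hP⟩, if_pos h]
          · rw [if_neg (fun hc => h hc.1), if_neg h]
        simp only [this]
        rw [Finset.sum_ite_eq' Finset.univ (G i) (fun _ => t i)]
        simp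
      · rw [if_neg hP]
        apply Finset.sum_eq_zero
        intro g _
        rw [if_neg (fun hc => hP hc.2)]
    rw [Finset.sum_congr rfl collapse]
    by_cases hkT : k ∈ T
    · have e : ∀ i ∈ S, (if G i k = true then t i else 0) = t i - (if i = k then t i else 0) := by
        intro i _
        by_cases hik : i = k
        · subst hik
          simp only [hG]
          simp [hkT]
        · have : G i k = true := by
            simp only [hG]
            rw [if_neg (fun h : k = i => hik h.symm)]
            simpa using hkT
          rw [if_pos this, if_neg hik]
          ring
      rw [Finset.sum_congr rfl e, Finset.sum_sub_distrib, htsum,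
        Finset.sum_ite_eq' S k (fun i => t i), if_pos hk]
      simp only [ht]
      rw [if_pos hkT]
      ring
    · have e : ∀ i ∈ S, (if G i k = true then t i else 0) = (if i = k then t i else 0) := by
        intro i _
        by_cases hik : i = k
        · subst hik
          simp only [hG]
          simp [hkT]
        · have : G i k ≠ true := by
            simp only [hG]
            rw [if_neg (fun h : k = i => hik h.symm)]
            simpa using hkT
          rw [if_neg this, if_neg hik]
      rw [Finset.sum_congr rfl e, Finset.sum_ite_eq' S k (fun i => t i), if_pos hk]
      simp only [ht]
      rw [if_neg hkT]

lemma integral_case {N : ℕ} (S : Finset (Fin N)) (c : Fin N → ℝ)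
    (hint : ∀ i ∈ S, c i = 0 ∨ c i = 1)
    (hcon : ∀ T ⊆ S, Odd T.card → 1 ≤ ∑ i ∈ S \ T, c i + ∑ i ∈ T, (1 - c i)) :
    inLocal S {g : Fin N → Bool | Even ((S.filter (fun i => g i = true)).card)} c := by
  classical
  set g₀ : Fin N → Bool := fun k => decide (k ∈ S ∧ c k = 1) with hg₀
  have hfilt : S.filter (fun i => g₀ i = true) = S.filter (fun i => c i = 1) := by
    ext k
    simp only [Finset.mem_filter, hg₀, decide_eq_true_eq]
    tauto
  have hmem : Even ((S.filter (fun i => g₀ i = true)).card) := by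
    rw [hfilt]
    by_contra hodd
    rw [Nat.not_even_iff_odd] at hodd
    have h1 := hcon (S.filter (fun i => c i = 1)) (Finset.filter_subset _ _) hodd
    have e1 : ∑ i ∈ S \ S.filter (fun i => c i = 1), c i = 0 := by
      apply Finset.sum_eq_zero
      intro i hi
      rw [Finset.mem_sdiff, Finset.mem_filter] at hi
      rcases hint i hi.1 with h | h
      · exact h
      · exact absurd ⟨hi.1, h⟩ hi.2
    have e2 : ∑ i ∈ S.filter (fun i => c i = 1), (1 - c i) = 0 := by
      apply Finset.sum_eq_zero
      intro i hi
      rw [Finset.mem_filter] at hi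
      rw [hi.2]; ring
    rw [e1, e2] at h1
    norm_num at h1
  refine ⟨fun g => if g = g₀ then 1 else 0, ?_, ?_, ?_, ?_⟩
  · intro g; dsimp only; split <;> norm_num
  · intro g hg
    show (if g = g₀ then (1:ℝ) else 0) = 0
    rw [if_neg]
    intro h
    exact hg (h ▸ hmem)
  · rw [Finset.sum_ite_eq' Finset.univ g₀ (fun _ => (1:ℝ))]
    simp
  · intro i hi
    have step : ∀ g : Fin N → Bool,
        (if g i = true then (if g = g₀ then (1:ℝ) else 0) else 0)
          = if g = g₀ then (if g₀ i = true then (1:ℝ) else 0) else 0 := by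
      intro g
      by_cases h : g = g₀
      · subst h
        rw [if_pos rfl]
        split <;> simp
      · rw [if_neg h]; split <;> rfl
    simp only [step]
    rw [Finset.sum_ite_eq' Finset.univ g₀ (fun _ => if g₀ i = true then (1:ℝ) else 0)]
    simp only [Finset.mem_univ, if_pos]
    rcases hint i hi with h | h
    · rw [h, if_neg]
      simp only [hg₀, decide_eq_true_eq]
      rintro ⟨-, h1⟩
      rw [h] at h1; norm_num at h1
    · rw [h, if_pos]
      simp only [hg₀, decide_eq_true_eq]
      exact ⟨hi, h⟩

lemma hard_dir {N : ℕ} (S : Finset (Fin N)) :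
    ∀ (n : ℕ) (c : Fin N → ℝ),
      (S.filter (fun i => c i ≠ 0 ∧ c i ≠ 1)).card ≤ n →
      (∀ i ∈ S, 0 ≤ c i ∧ c i ≤ 1) →
      (∀ T ⊆ S, Odd T.card → 1 ≤ ∑ i ∈ S \ T, c i + ∑ i ∈ T, (1 - c i)) →
      inLocal S {g : Fin N → Bool | Even ((S.filter (fun i => g i = true)).card)} c := by
  classical
  intro n
  induction n with
  | zero =>
    intro c hcard _ hcon
    apply integral_case S c ?_ hcon
    intro i hi
    by_contra hcontra
    push_neg at hcontra
    have : i ∈ S.filter (fun i => c i ≠ 0 ∧ c i ≠ 1) :=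
      Finset.mem_filter.mpr ⟨hi, hcontra.1, hcontra.2⟩
    have := Finset.card_pos.mpr ⟨i, this⟩
    omega
  | succ n ih =>
    intro c hcard hbox hcon
    by_cases hfrac : ∃ i ∈ S, c i ≠ 0 ∧ c i ≠ 1
    swap
    · push_neg at hfrac
      apply integral_case S c ?_ hcon
      intro i hi
      by_contra hcontra
      push_neg at hcontra
      exact hcontra.2 (hfrac i hi hcontra.1)
    obtain ⟨i, hiS, hi0, hi1⟩ := hfrac
    by_cases htight : ∃ T, T ⊆ S ∧ Odd T.card ∧ ∑ j ∈ S \ T, c j + ∑ j ∈ T, (1 - c j) = 1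
    · obtain ⟨T, hTS, hTodd, hTt⟩ := htight
      exact tight_case S c hbox T hTS hTodd hTt
    push_neg at htight
    have hc0 : 0 < c i := lt_of_le_of_ne (hbox i hiS).1 (Ne.symm hi0)
    have hc1 : c i < 1 := lt_of_le_of_ne (hbox i hiS).2 hi1
    set slack : Finset (Fin N) → ℝ :=
      fun T => (∑ j ∈ S \ T, c j + ∑ j ∈ T, (1 - c j)) - 1 with hslack
    set Up : Finset (Finset (Fin N)) :=
      S.powerset.filter (fun T => Odd T.card ∧ i ∈ T) with hUp
    set Dn : Finset (Finset (Fin N)) :=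
      S.powerset.filter (fun T => Odd T.card ∧ i ∉ T) with hDn
    set Ap : Finset ℝ := insert (1 - c i) (Up.image slack) with hAp
    set Am : Finset ℝ := insert (c i) (Dn.image slack) with hAm
    have hslack_pos : ∀ T, T ⊆ S → Odd T.card → 0 < slack T := by
      intro T hTS hTodd
      have h1 := hcon T hTS hTodd
      have h2 := htight T hTS hTodd
      simp only [hslack]
      rcases lt_or_eq_of_le h1 with h | h
      · linarith
      · exact absurd h.symm h2
    have hAp_pos : ∀ x ∈ Ap, 0 < x := by
      intro x hx
      rw [hAp, Finset.mem_insert] at hx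
      rcases hx with h | h
      · rw [h]; linarith
      · obtain ⟨T, hTmem, hTx⟩ := Finset.mem_image.mp h
        rw [hUp, Finset.mem_filter, Finset.mem_powerset] at hTmem
        exact hTx ▸ hslack_pos T hTmem.1 hTmem.2.1
    have hAm_pos : ∀ x ∈ Am, 0 < x := by
      intro x hx
      rw [hAm, Finset.mem_insert] at hx
      rcases hx with h | h
      · rw [h]; linarith
      · obtain ⟨T, hTmem, hTx⟩ := Finset.mem_image.mp h
        rw [hDn, Finset.mem_filter, Finset.mem_powerset] at hTmem
        exact hTx ▸ hslack_pos T hTmem.1 hTmem.2.1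
    have hApne : Ap.Nonempty := ⟨1 - c i, by rw [hAp]; exact Finset.mem_insert_self _ _⟩
    have hAmne : Am.Nonempty := ⟨c i, by rw [hAm]; exact Finset.mem_insert_self _ _⟩
    set ep : ℝ := Ap.min' hApne with hep
    set em : ℝ := Am.min' hAmne with hem
    have hep_pos : 0 < ep := hAp_pos _ (Finset.min'_mem _ _)
    have hem_pos : 0 < em := hAm_pos _ (Finset.min'_mem _ _)
    have hep_le : ep ≤ 1 - c i := Finset.min'_le _ _ (by rw [hAp]; exact Finset.mem_insert_self _ _)
    have hem_le : em ≤ c i := Finset.min'_le _ _ (by rw [hAm]; exact Finset.mem_insert_self _ _)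
    have hep_slack : ∀ T, T ⊆ S → Odd T.card → i ∈ T → ep ≤ slack T := by
      intro T hTS hTodd hiT
      apply Finset.min'_le
      rw [hAp, Finset.mem_insert]
      right
      exact Finset.mem_image.mpr ⟨T, by rw [hUp, Finset.mem_filter, Finset.mem_powerset]; exact ⟨hTS, hTodd, hiT⟩, rfl⟩
    have hem_slack : ∀ T, T ⊆ S → Odd T.card → i ∉ T → em ≤ slack T := by
      intro T hTS hTodd hiT
      apply Finset.min'_le
      rw [hAm, Finset.mem_insert]
      right
      exact Finset.mem_image.mpr ⟨T, by rw [hDn, Finset.mem_filter, Finset.mem_powerset]; exact ⟨hTS, hTodd, hiT⟩, rfl⟩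
    -- the two perturbed points
    set cp : Fin N → ℝ := Function.update c i (c i + ep) with hcp
    set cm : Fin N → ℝ := Function.update c i (c i - em) with hcm
    -- sum helpers
    have key_mem : ∀ (d : ℝ) (A : Finset (Fin N)), i ∈ A → ∀ (φ : ℝ → ℝ),
        ∑ j ∈ A, φ (Function.update c i d j) = ∑ j ∈ A, φ (c j) + (φ d - φ (c i)) := by
      intro d A hiA φ
      rw [← Finset.add_sum_erase A _ hiA, ← Finset.add_sum_erase A (fun j => φ (c j)) hiA]
      have e : ∑ j ∈ A.erase i, φ (Function.update c i d j) = ∑ j ∈ A.erase i, φ (c j) :=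
        Finset.sum_congr rfl fun j hj => by
          rw [Function.update_of_ne (Finset.ne_of_mem_erase hj)]
      rw [e, Function.update_self]
      ring
    have key_not : ∀ (d : ℝ) (A : Finset (Fin N)), i ∉ A → ∀ (φ : ℝ → ℝ),
        ∑ j ∈ A, φ (Function.update c i d j) = ∑ j ∈ A, φ (c j) := by
      intro d A hiA φ
      refine Finset.sum_congr rfl fun j hj => ?_
      rw [Function.update_of_ne (fun h : j = i => hiA (by rw [← h]; exact hj))]
    -- constraint sums for updates
    have con_upd : ∀ (d : ℝ) (T : Finset (Fin N)), T ⊆ S → Odd T.card →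
        ∑ j ∈ S \ T, Function.update c i d j + ∑ j ∈ T, (1 - Function.update c i d j)
          = (∑ j ∈ S \ T, c j + ∑ j ∈ T, (1 - c j)) + (if i ∈ T then c i - d else d - c i) := by
      intro d T hTS hTodd
      by_cases hiT : i ∈ T
      · rw [if_pos hiT]
        rw [key_mem d T hiT (fun x => 1 - x),
          key_not d (S \ T) (fun h => (Finset.mem_sdiff.mp h).2 hiT) (fun x => x)]
        ring
      · rw [if_neg hiT]
        have hiST : i ∈ S \ T := Finset.mem_sdiff.mpr ⟨hiS, hiT⟩
        rw [key_mem d (S \ T) hiST (fun x => x), key_not d T hiT (fun x => 1 - x)]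
        ring
    have hbox_p : ∀ j ∈ S, 0 ≤ cp j ∧ cp j ≤ 1 := by
      intro j hj
      by_cases hji : j = i
      · subst hji
        rw [hcp, Function.update_self]
        constructor <;> linarith
      · rw [hcp, Function.update_of_ne hji]
        exact hbox j hj
    have hbox_m : ∀ j ∈ S, 0 ≤ cm j ∧ cm j ≤ 1 := by
      intro j hj
      by_cases hji : j = i
      · subst hji
        rw [hcm, Function.update_self]
        constructor <;> linarith
      · rw [hcm, Function.update_of_ne hji]
        exact hbox j hj
    have hcon_p : ∀ T ⊆ S, Odd T.card →
        1 ≤ ∑ j ∈ S \ T, cp j + ∑ j ∈ T, (1 - cp j) := by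
      intro T hTS hTodd
      rw [hcp, con_upd (c i + ep) T hTS hTodd]
      have h1 := hcon T hTS hTodd
      by_cases hiT : i ∈ T
      · rw [if_pos hiT]
        have := hep_slack T hTS hTodd hiT
        simp only [hslack] at this
        linarith
      · rw [if_neg hiT]
        linarith
    have hcon_m : ∀ T ⊆ S, Odd T.card →
        1 ≤ ∑ j ∈ S \ T, cm j + ∑ j ∈ T, (1 - cm j) := by
      intro T hTS hTodd
      rw [hcm, con_upd (c i - em) T hTS hTodd]
      have h1 := hcon T hTS hTodd
      by_cases hiT : i ∈ T
      · rw [if_pos hiT]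
        linarith
      · rw [if_neg hiT]
        have := hem_slack T hTS hTodd hiT
        simp only [hslack] at this
        linarith
    -- cp is in the polytope hull
    have hloc_p : inLocal S {g : Fin N → Bool | Even ((S.filter (fun i => g i = true)).card)} cp := by
      have := Finset.min'_mem Ap hApne
      rw [← hep, hAp, Finset.mem_insert] at this
      rcases this with h | h
      · -- cp i = 1, one fewer fractional coordinate
        apply ih cp ?_ hbox_p hcon_p
        have hsub : S.filter (fun j => cp j ≠ 0 ∧ cp j ≠ 1)
            ⊆ (S.filter (fun j => c j ≠ 0 ∧ c j ≠ 1)).erase i := by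
          intro j hj
          rw [Finset.mem_filter] at hj
          have hji : j ≠ i := by
            intro hji
            subst hji
            apply hj.2.2
            rw [hcp, Function.update_self]
            linarith
          rw [Finset.mem_erase, Finset.mem_filter]
          rw [hcp, Function.update_of_ne hji] at hj
          exact ⟨hji, hj.1, hj.2⟩
        have hi_mem : i ∈ S.filter (fun j => c j ≠ 0 ∧ c j ≠ 1) :=
          Finset.mem_filter.mpr ⟨hiS, hi0, hi1⟩
        have := Finset.card_le_card hsub
        rw [Finset.card_erase_of_mem hi_mem] at this
        omega
      · -- a tight constraint appears
        obtain ⟨T, hTmem, hTx⟩ := Finset.mem_image.mp h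
        rw [hUp, Finset.mem_filter, Finset.mem_powerset] at hTmem
        obtain ⟨hTS, hTodd, hiT⟩ := hTmem
        apply tight_case S cp hbox_p T hTS hTodd
        rw [hcp, con_upd (c i + ep) T hTS hTodd, if_pos hiT]
        simp only [hslack] at hTx
        linarith
    have hloc_m : inLocal S {g : Fin N → Bool | Even ((S.filter (fun i => g i = true)).card)} cm := by
      have := Finset.min'_mem Am hAmne
      rw [← hem, hAm, Finset.mem_insert] at this
      rcases this with h | h
      · -- cm i = 0
        apply ih cm ?_ hbox_m hcon_m
        have hsub : S.filter (fun j => cm j ≠ 0 ∧ cm j ≠ 1)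
            ⊆ (S.filter (fun j => c j ≠ 0 ∧ c j ≠ 1)).erase i := by
          intro j hj
          rw [Finset.mem_filter] at hj
          have hji : j ≠ i := by
            intro hji
            subst hji
            apply hj.2.1
            rw [hcm, Function.update_self]
            linarith
          rw [Finset.mem_erase, Finset.mem_filter]
          rw [hcm, Function.update_of_ne hji] at hj
          exact ⟨hji, hj.1, hj.2⟩
        have hi_mem : i ∈ S.filter (fun j => c j ≠ 0 ∧ c j ≠ 1) :=
          Finset.mem_filter.mpr ⟨hiS, hi0, hi1⟩
        have := Finset.card_le_card hsub
        rw [Finset.card_erase_of_mem hi_mem] at this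
        omega
      · obtain ⟨T, hTmem, hTx⟩ := Finset.mem_image.mp h
        rw [hDn, Finset.mem_filter, Finset.mem_powerset] at hTmem
        obtain ⟨hTS, hTodd, hiT⟩ := hTmem
        apply tight_case S cm hbox_m T hTS hTodd
        rw [hcm, con_upd (c i - em) T hTS hTodd, if_neg hiT]
        simp only [hslack] at hTx
        linarith
    -- combine
    refine inLocal_combo S _ cp cm c (em / (ep + em)) ?_ ?_ hloc_p hloc_m ?_
    · positivity
    · rw [div_le_one (by linarith)]
      linarith
    · intro j hj
      by_cases hji : j = i
      · subst hji
        rw [hcp, hcm, Function.update_self, Function.update_self]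
        field_simp
        ring
      · rw [hcp, hcm, Function.update_of_ne hji, Function.update_of_ne hji]
        field_simp
        ring

/-- parity polytope characterization.  For the single parity check
code on the index set `S` (binary vectors with an even number of ones on `S`), a
vector `c` lies in its convex hull if and only if `0 ≤ c i ≤ 1` for all `i ∈ S`
and `∑_{i ∈ S∖T} c_i + ∑_{i ∈ T}(1 - c_i) ≥ 1` for every odd-sized `T ⊆ S`. -/
theorem parity_polytope_characterization
    {N : ℕ} (S : Finset (Fin N)) (c : Fin N → ℝ) :
    inLocal S {g : Fin N → Bool | Even ((S.filter (fun i => g i = true)).card)} c ↔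
      ((∀ i ∈ S, 0 ≤ c i ∧ c i ≤ 1) ∧
        ∀ T ⊆ S, Odd T.card → 1 ≤ ∑ i ∈ S \ T, c i + ∑ i ∈ T, (1 - c i)) := by
  constructor
  · exact forward_dir S c
  · rintro ⟨hbox, hcon⟩
    exact hard_dir S _ c le_rfl hbox hcon
end

section
/- The minimum distance lower bound obtained by forcing local codewords is valid: d_min(C) ≥ min over check nodes r and nonzero local codewords c_r ∈ C_r of (the minimum of Σ_i c_i over all c ∈ Q(C) with c_i = c_{r,i} for i ∈ N_r), where d_min(C) is the minimum Hamming weight of a nonzero codeword, provided every nonzero codeword of C has a nonzero local codeword on at least one check node. -/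
/-- validity of the minimum-distance lower bound obtained by forcing
local codewords.  For a code given by local codes `Cloc j` on neighborhoods
`Nbr j` (codewords are the `g` lying in every `Cloc j`), provided every nonzero
codeword has a nonzero local codeword on at least one check node, the Hamming
weight of every nonzero codeword is at least the minimum, over check nodes `r`
and nonzero local codewords `σ ∈ Cloc r`, of the minimum `L₁`-weight over the
points of the fundamental polytope whose coordinates on `N_r` agree with `σ`;
i.e. `d_min(C)` is lower bounded by this minimum. -/
theorem forced_local_codeword_min_distance_bound
    {N : ℕ} {J : Type}
    (Nbr : J → Finset (Fin N)) (Cloc : J → Set (Fin N → Bool))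
    (hproviso : ∀ g : Fin N → Bool, (∀ j, g ∈ Cloc j) → g ≠ (fun _ => false) →
      ∃ j, ∃ i ∈ Nbr j, g i = true) :
    ∀ g : Fin N → Bool, (∀ j, g ∈ Cloc j) → g ≠ (fun _ => false) →
      sInf {x : ℝ | ∃ (r : J) (σ : Fin N → Bool), σ ∈ Cloc r ∧ (∃ i ∈ Nbr r, σ i = true) ∧
          x = sInf {y : ℝ | ∃ c : Fin N → ℝ,
            ((∀ i, 0 ≤ c i ∧ c i ≤ 1) ∧ ∀ j, inLocal (Nbr j) (Cloc j) c) ∧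
            (∀ i ∈ Nbr r, c i = (if σ i = true then 1 else 0)) ∧
            y = ∑ i, c i}}
        ≤ ((Finset.univ.filter (fun i => g i = true)).card : ℝ) := by
  intro g hg hgne
  obtain ⟨j, i0, hi0, hgi0⟩ := hproviso g hg hgne
  set c : Fin N → ℝ := fun i => if g i = true then 1 else 0 with hc
  have hcnn : ∀ i, 0 ≤ c i ∧ c i ≤ 1 := by
    intro i; simp only [hc]; split <;> norm_num
  have hW : (∑ i, c i) = ((Finset.univ.filter (fun i => g i = true)).card : ℝ) := by
    simp [hc, Finset.sum_boole]
  have hloc : ∀ j', inLocal (Nbr j') (Cloc j') c := by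
    intro j'
    refine ⟨fun h => if h = g then 1 else 0, ?_, ?_, ?_, ?_⟩
    · intro h; dsimp only; split <;> norm_num
    · intro h hh; dsimp only; split
      · next heq => exact absurd (heq ▸ hg j') hh
      · rfl
    · simp
    · intro i _
      have : ∀ h : Fin N → Bool,
          (if h i = true then (if h = g then (1:ℝ) else 0) else 0)
          = if h = g then (if g i = true then (1:ℝ) else 0) else 0 := by
        intro h
        by_cases hh : h = g
        · subst hh; simp
        · simp [hh]
      simp only [this, Finset.sum_ite_eq' Finset.univ g, Finset.mem_univ, if_true]
      rfl
  -- the inner set for r := j, σ := g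
  set T : Set ℝ := {y : ℝ | ∃ c : Fin N → ℝ,
      ((∀ i, 0 ≤ c i ∧ c i ≤ 1) ∧ ∀ j', inLocal (Nbr j') (Cloc j') c) ∧
      (∀ i ∈ Nbr j, c i = (if g i = true then 1 else 0)) ∧
      y = ∑ i, c i} with hT
  have hTmem : ((Finset.univ.filter (fun i => g i = true)).card : ℝ) ∈ T := by
    exact ⟨c, ⟨hcnn, hloc⟩, fun i _ => rfl, hW.symm⟩
  have hTbdd : ∀ y ∈ T, (0:ℝ) ≤ y := by
    rintro y ⟨d, ⟨hd, _⟩, _, rfl⟩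
    exact Finset.sum_nonneg fun i _ => (hd i).1
  have h1 : sInf T ≤ ((Finset.univ.filter (fun i => g i = true)).card : ℝ) :=
    csInf_le ⟨0, hTbdd⟩ hTmem
  have hmemOuter : sInf T ∈ {x : ℝ | ∃ (r : J) (σ : Fin N → Bool), σ ∈ Cloc r ∧
      (∃ i ∈ Nbr r, σ i = true) ∧
      x = sInf {y : ℝ | ∃ c : Fin N → ℝ,
        ((∀ i, 0 ≤ c i ∧ c i ≤ 1) ∧ ∀ j, inLocal (Nbr j) (Cloc j) c) ∧
        (∀ i ∈ Nbr r, c i = (if σ i = true then 1 else 0)) ∧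
        y = ∑ i, c i}} := ⟨j, g, hg j, ⟨i0, hi0, hgi0⟩, rfl⟩
  have hObdd : ∀ x ∈ {x : ℝ | ∃ (r : J) (σ : Fin N → Bool), σ ∈ Cloc r ∧
      (∃ i ∈ Nbr r, σ i = true) ∧
      x = sInf {y : ℝ | ∃ c : Fin N → ℝ,
        ((∀ i, 0 ≤ c i ∧ c i ≤ 1) ∧ ∀ j, inLocal (Nbr j) (Cloc j) c) ∧
        (∀ i ∈ Nbr r, c i = (if σ i = true then 1 else 0)) ∧
        y = ∑ i, c i}}, (0:ℝ) ≤ x := by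
    rintro x ⟨r, σ, _, _, rfl⟩
    refine Real.sInf_nonneg ?_
    rintro y ⟨d, ⟨hd, _⟩, _, rfl⟩
    exact Finset.sum_nonneg fun i _ => (hd i).1
  exact le_trans (csInf_le ⟨0, hObdd⟩ hmemOuter) h1
end
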